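/- arXiv:math/0610148 — 7 statements merged into one kernel-verified Lean document; each statement's English description precedes it below -/
import Mathlib

section
/- Let d ≥ 1, let 0 < κ < 1, and let X : ℝ² → ℝ^d be a C² function satisfying the linear wave equation ∂ₜₜX = κ²∂ₛₛX on all of ℝ² together with the constraint |∂ₜX(t,s) + κ∂ₛX(t,s)|² = 1 − κ² and |∂ₜX(t,s) − κ∂ₛX(t,s)|² = 1 − κ² for every (t,s) ∈ ℝ². Then X satisfies the relativistic string equation ∂ₜ(B∂ₜX − C∂ₛX) − ∂ₛ(C∂ₜX + D∂ₛX) = 0 on ℝ². -/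
open scoped RealInnerProductSpace

/-- Partial derivative in the first variable `t` of a map on `ℝ × ℝ`. -/
noncomputable def pt {F : Type*} [NormedAddCommGroup F] [NormedSpace ℝ F]
    (X : ℝ × ℝ → F) (p : ℝ × ℝ) : F := deriv (fun t => X (t, p.2)) p.1

/-- Partial derivative in the second variable `s` of a map on `ℝ × ℝ`. -/
noncomputable def ps {F : Type*} [NormedAddCommGroup F] [NormedSpace ℝ F]
    (X : ℝ × ℝ → F) (p : ℝ × ℝ) : F := deriv (fun s => X (p.1, s)) p.2

noncomputable def strA {d : ℕ} (X : ℝ × ℝ → EuclideanSpace ℝ (Fin d)) (p : ℝ × ℝ) : ℝ :=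
  Real.sqrt ((1 + ‖ps X p‖ ^ 2) * (1 - ‖pt X p‖ ^ 2) + ⟪pt X p, ps X p⟫ ^ 2)

noncomputable def strB {d : ℕ} (X : ℝ × ℝ → EuclideanSpace ℝ (Fin d)) (p : ℝ × ℝ) : ℝ :=
  (1 + ‖ps X p‖ ^ 2) / strA X p

noncomputable def strC {d : ℕ} (X : ℝ × ℝ → EuclideanSpace ℝ (Fin d)) (p : ℝ × ℝ) : ℝ :=
  ⟪pt X p, ps X p⟫ / strA X p

noncomputable def strD {d : ℕ} (X : ℝ × ℝ → EuclideanSpace ℝ (Fin d)) (p : ℝ × ℝ) : ℝ :=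
  (1 - ‖pt X p‖ ^ 2) / strA X p

section Aux

variable {F : Type*} [NormedAddCommGroup F] [NormedSpace ℝ F]

lemma pt_eq_fderiv {X : ℝ × ℝ → F} (hX : Differentiable ℝ X) (p : ℝ × ℝ) :
    pt X p = fderiv ℝ X p ((1 : ℝ), (0 : ℝ)) := by
  have hline : HasDerivAt (fun t : ℝ => (t, p.2)) ((1 : ℝ), (0 : ℝ)) p.1 :=
    (hasDerivAt_id p.1).prodMk (hasDerivAt_const _ _)
  have h := ((hX p).hasFDerivAt.comp_hasDerivAt p.1 hline)
  exact h.deriv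

lemma ps_eq_fderiv {X : ℝ × ℝ → F} (hX : Differentiable ℝ X) (p : ℝ × ℝ) :
    ps X p = fderiv ℝ X p ((0 : ℝ), (1 : ℝ)) := by
  have hline : HasDerivAt (fun s : ℝ => (p.1, s)) ((0 : ℝ), (1 : ℝ)) p.2 :=
    (hasDerivAt_const _ _).prodMk (hasDerivAt_id p.2)
  have h := ((hX p).hasFDerivAt.comp_hasDerivAt p.2 hline)
  exact h.deriv

lemma contDiff_pt {X : ℝ × ℝ → F} (hX : ContDiff ℝ 2 X) : ContDiff ℝ 1 (pt X) := by
  have : ContDiff ℝ 1 fun q : ℝ × ℝ => fderiv ℝ X q ((1 : ℝ), (0 : ℝ)) :=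
    (hX.fderiv_right (by norm_num)).clm_apply contDiff_const
  have heq : pt X = fun q : ℝ × ℝ => fderiv ℝ X q ((1 : ℝ), (0 : ℝ)) :=
    funext fun q => pt_eq_fderiv (hX.differentiable (by norm_num)) q
  rw [heq]; exact this

lemma contDiff_ps {X : ℝ × ℝ → F} (hX : ContDiff ℝ 2 X) : ContDiff ℝ 1 (ps X) := by
  have : ContDiff ℝ 1 fun q : ℝ × ℝ => fderiv ℝ X q ((0 : ℝ), (1 : ℝ)) :=
    (hX.fderiv_right (by norm_num)).clm_apply contDiff_const
  have heq : ps X = fun q : ℝ × ℝ => fderiv ℝ X q ((0 : ℝ), (1 : ℝ)) :=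
    funext fun q => ps_eq_fderiv (hX.differentiable (by norm_num)) q
  rw [heq]; exact this

end Aux

/-- Every solution of the linear wave equation `∂ₜₜX = κ²∂ₛₛX` satisfying the
relativistic constraint `|∂ₜX ± κ∂ₛX|² = 1 - κ²` everywhere is a global classical
relativistic string, i.e. solves the relativistic string equation. -/
theorem statement0 (d : ℕ) (hd : 1 ≤ d) (κ : ℝ) (hκ0 : 0 < κ) (hκ1 : κ < 1)
    (X : ℝ × ℝ → EuclideanSpace ℝ (Fin d)) (hX : ContDiff ℝ 2 X)
    (hwave : ∀ p : ℝ × ℝ, pt (pt X) p = κ ^ 2 • ps (ps X) p)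
    (hplus : ∀ p : ℝ × ℝ, ‖pt X p + κ • ps X p‖ ^ 2 = 1 - κ ^ 2)
    (hminus : ∀ p : ℝ × ℝ, ‖pt X p - κ • ps X p‖ ^ 2 = 1 - κ ^ 2) :
    ∀ p : ℝ × ℝ,
      pt (fun q => strB X q • pt X q - strC X q • ps X q) p
        - ps (fun q => strC X q • pt X q + strD X q • ps X q) p = 0 := by
  have hκ : κ ≠ 0 := ne_of_gt hκ0
  have key : ∀ q : ℝ × ℝ,
      ⟪pt X q, ps X q⟫ = 0 ∧ 1 - ‖pt X q‖ ^ 2 = κ ^ 2 * (1 + ‖ps X q‖ ^ 2) := by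
    intro q
    have h1 := hplus q
    have h2 := hminus q
    rw [norm_add_sq_real, real_inner_smul_right, norm_smul, Real.norm_eq_abs, mul_pow, sq_abs] at h1
    rw [norm_sub_sq_real, real_inner_smul_right, norm_smul, Real.norm_eq_abs, mul_pow, sq_abs] at h2
    constructor
    · nlinarith [hκ0]
    · nlinarith [hκ0]
  have hApos : ∀ q : ℝ × ℝ, (0:ℝ) < 1 + ‖ps X q‖ ^ 2 := by
    intro q; positivity
  have hA : ∀ q : ℝ × ℝ, strA X q = κ * (1 + ‖ps X q‖ ^ 2) := by
    intro q
    unfold strA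
    rw [(key q).1, (key q).2]
    have : (1 + ‖ps X q‖ ^ 2) * (κ ^ 2 * (1 + ‖ps X q‖ ^ 2)) + 0 ^ 2
        = (κ * (1 + ‖ps X q‖ ^ 2)) ^ 2 := by ring
    rw [this, Real.sqrt_sq (by positivity)]
  have hB : ∀ q : ℝ × ℝ, strB X q = κ⁻¹ := by
    intro q
    unfold strB
    rw [hA q]
    field_simp
  have hC : ∀ q : ℝ × ℝ, strC X q = 0 := by
    intro q
    unfold strC
    rw [(key q).1, zero_div]
  have hD : ∀ q : ℝ × ℝ, strD X q = κ := by
    intro q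
    unfold strD
    rw [hA q, (key q).2]
    rw [pow_two κ, mul_assoc]
    rw [mul_div_assoc]
    rw [div_self (by positivity : κ * (1 + ‖ps X q‖ ^ 2) ≠ 0), mul_one]
  have hfun1 : (fun q => strB X q • pt X q - strC X q • ps X q)
      = fun q => κ⁻¹ • pt X q := by
    funext q; rw [hB q, hC q, zero_smul, sub_zero]
  have hfun2 : (fun q => strC X q • pt X q + strD X q • ps X q)
      = fun q => κ • ps X q := by
    funext q; rw [hC q, hD q, zero_smul, zero_add]
  intro p
  rw [hfun1, hfun2]
  have hXd : Differentiable ℝ X := hX.differentiable (by norm_num)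
  have hptd : Differentiable ℝ (pt X) := (contDiff_pt hX).differentiable one_ne_zero
  have hpsd : Differentiable ℝ (ps X) := (contDiff_ps hX).differentiable one_ne_zero
  have hline1 : Differentiable ℝ (fun t : ℝ => ((t, p.2) : ℝ × ℝ)) :=
    differentiable_id.prodMk (differentiable_const _)
  have hline2 : Differentiable ℝ (fun s : ℝ => ((p.1, s) : ℝ × ℝ)) :=
    (differentiable_const _).prodMk differentiable_id
  have e1 : pt (fun q => κ⁻¹ • pt X q) p = κ⁻¹ • pt (pt X) p := by
    unfold pt
    exact (((hptd.comp hline1) p.1).hasDerivAt.const_smul κ⁻¹).deriv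
  have e2 : ps (fun q => κ • ps X q) p = κ • ps (ps X) p := by
    unfold ps
    exact (((hpsd.comp hline2) p.2).hasDerivAt.const_smul κ).deriv
  rw [e1, e2, hwave p, smul_smul]
  have : κ⁻¹ * κ ^ 2 = κ := by field_simp
  rw [this, sub_self]
end

section
/- Let d ≥ 1, let 0 < κ < 1, and let X : ℝ² → ℝ^d be a C² function satisfying the wave equation ∂ₜₜX = κ²∂ₛₛX on ℝ². Suppose that at time t = 0 one has |∂ₜX(0,s) + κ∂ₛX(0,s)|² = 1 − κ² and |∂ₜX(0,s) − κ∂ₛX(0,s)|² = 1 − κ² for all s ∈ ℝ. Then |∂ₜX(t,s) + κ∂ₛX(t,s)|² = 1 − κ² and |∂ₜX(t,s) − κ∂ₛX(t,s)|² = 1 − κ² for all (t,s) ∈ ℝ². -/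
open scoped RealInnerProductSpace

section Aux
variable {F : Type*} [NormedAddCommGroup F] [NormedSpace ℝ F]

lemma pt_eq (X : ℝ × ℝ → F) (hX : Differentiable ℝ X) (p : ℝ × ℝ) :
    pt X p = fderiv ℝ X p (1, 0) := by
  obtain ⟨a, b⟩ := p
  have hγ : HasDerivAt (fun t : ℝ => (t, b)) ((1 : ℝ), (0 : ℝ)) a := by
    simpa using (hasDerivAt_id a).prodMk (hasDerivAt_const a b)
  exact ((hX (a, b)).hasFDerivAt.comp_hasDerivAt a hγ).deriv

lemma ps_eq (X : ℝ × ℝ → F) (hX : Differentiable ℝ X) (p : ℝ × ℝ) :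
    ps X p = fderiv ℝ X p (0, 1) := by
  obtain ⟨a, b⟩ := p
  have hγ : HasDerivAt (fun s : ℝ => (a, s)) ((0 : ℝ), (1 : ℝ)) b := by
    simpa using (hasDerivAt_const b a).prodMk (hasDerivAt_id b)
  exact ((hX (a, b)).hasFDerivAt.comp_hasDerivAt b hγ).deriv

lemma hasFDerivAt_apply_fderiv (X : ℝ × ℝ → F) (hD : Differentiable ℝ (fderiv ℝ X))
    (w : ℝ × ℝ) (p : ℝ × ℝ) :
    HasFDerivAt (fun q => fderiv ℝ X q w)
      ((ContinuousLinearMap.apply ℝ F w).comp (fderiv ℝ (fderiv ℝ X) p)) p :=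
  (ContinuousLinearMap.apply ℝ F w).hasFDerivAt.comp p (hD p).hasFDerivAt

/-- The key transport lemma along characteristics. -/
lemma key (κ ε : ℝ) (hε : ε ^ 2 = 1) (X : ℝ × ℝ → F) (hX : ContDiff ℝ 2 X)
    (hwave : ∀ p : ℝ × ℝ,
      fderiv ℝ (fderiv ℝ X) p (1, 0) (1, 0) = κ ^ 2 • fderiv ℝ (fderiv ℝ X) p (0, 1) (0, 1))
    (p : ℝ × ℝ) :
    fderiv ℝ X p (1, ε * κ) = fderiv ℝ X (0, p.2 + ε * κ * p.1) (1, ε * κ) := by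
  have hX' : ContDiff ℝ ((1 : ℕ) + 1) X := by exact_mod_cast hX
  have hD : ContDiff ℝ 1 (fderiv ℝ X) := (contDiff_succ_iff_fderiv.mp hX').2.2
  have hDd : Differentiable ℝ (fderiv ℝ X) := hD.differentiable one_ne_zero
  have hXd : Differentiable ℝ X := (contDiff_succ_iff_fderiv.mp hX').1
  set w : ℝ × ℝ := (1, ε * κ) with hw
  set u : ℝ × ℝ → F := fun q => fderiv ℝ X q w with hu
  set c : ℝ := p.2 + ε * κ * p.1 with hc
  set γ : ℝ → ℝ × ℝ := fun t => (t, c - ε * κ * t) with hγdef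
  -- symmetry of second derivative
  have hsymm : ∀ q : ℝ × ℝ, ∀ v v' : ℝ × ℝ,
      fderiv ℝ (fderiv ℝ X) q v v' = fderiv ℝ (fderiv ℝ X) q v' v := fun q v v' =>
    second_derivative_symmetric (fun y => (hXd y).hasFDerivAt) (hDd q).hasFDerivAt v v'
  -- the directional derivative of u along (1, -εκ) vanishes
  have hzero : ∀ q : ℝ × ℝ, fderiv ℝ (fderiv ℝ X) q (1, -(ε * κ)) w = 0 := by
    intro q
    have e1 : ((1 : ℝ), -(ε * κ)) = (1, 0) - (ε * κ) • ((0 : ℝ), (1 : ℝ)) := by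
      simp [Prod.ext_iff]
    have e2 : w = (1, 0) + (ε * κ) • ((0 : ℝ), (1 : ℝ)) := by
      simp [hw, Prod.ext_iff]
    rw [e1, e2]
    simp only [map_sub, map_add, map_smul, ContinuousLinearMap.sub_apply,
      ContinuousLinearMap.add_apply, ContinuousLinearMap.smul_apply]
    rw [hsymm q (0, 1) (1, 0), hwave q]
    rw [smul_sub, smul_smul]
    rw [show ε * κ * (ε * κ) = κ ^ 2 by rw [show ε * κ * (ε * κ) = ε ^ 2 * κ ^ 2 by ring, hε, one_mul]]
    abel
  -- u ∘ γ is constant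
  have hderiv : ∀ t : ℝ, HasDerivAt (fun t => u (γ t)) 0 t := by
    intro t
    have hγ' : HasDerivAt γ ((1 : ℝ), -(ε * κ)) t := by
      have h2 : HasDerivAt (fun t : ℝ => c - ε * κ * t) (-(ε * κ)) t := by
        have := (hasDerivAt_const t c).sub ((hasDerivAt_id t).const_mul (ε * κ))
        simp only [id, mul_one, zero_sub] at this
        exact this
      simpa using (hasDerivAt_id t).prodMk h2
    have := (hasFDerivAt_apply_fderiv X hDd w (γ t)).comp_hasDerivAt t hγ'
    simpa [hzero (γ t), Function.comp_def] using this
  have hconst : u (γ p.1) = u (γ 0) := by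
    refine is_const_of_deriv_eq_zero (fun t => (hderiv t).differentiableAt) (fun t => (hderiv t).deriv) _ _
  have hγp : γ p.1 = p := by
    simp [hγdef, hc]
  have hγ0 : γ 0 = (0, c) := by simp [hγdef]
  rw [hγp, hγ0] at hconst
  exact hconst
end Aux

/-- The relativistic constraint `|∂ₜX ± κ∂ₛX|² = 1 - κ²` is propagated by the
wave equation `∂ₜₜX = κ²∂ₛₛX`: if it holds at time `t = 0` it holds at all times. -/
theorem statement2 (d : ℕ) (hd : 1 ≤ d) (κ : ℝ) (hκ0 : 0 < κ) (hκ1 : κ < 1)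
    (X : ℝ × ℝ → EuclideanSpace ℝ (Fin d)) (hX : ContDiff ℝ 2 X)
    (hwave : ∀ p : ℝ × ℝ, pt (pt X) p = κ ^ 2 • ps (ps X) p)
    (hplus0 : ∀ s : ℝ, ‖pt X (0, s) + κ • ps X (0, s)‖ ^ 2 = 1 - κ ^ 2)
    (hminus0 : ∀ s : ℝ, ‖pt X (0, s) - κ • ps X (0, s)‖ ^ 2 = 1 - κ ^ 2) :
    ∀ p : ℝ × ℝ,
      ‖pt X p + κ • ps X p‖ ^ 2 = 1 - κ ^ 2 ∧
      ‖pt X p - κ • ps X p‖ ^ 2 = 1 - κ ^ 2 := by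
  have hX' : ContDiff ℝ ((1 : ℕ) + 1) X := by exact_mod_cast hX
  have hD : ContDiff ℝ 1 (fderiv ℝ X) := (contDiff_succ_iff_fderiv.mp hX').2.2
  have hDd : Differentiable ℝ (fderiv ℝ X) := hD.differentiable one_ne_zero
  have hXd : Differentiable ℝ X := (contDiff_succ_iff_fderiv.mp hX').1
  -- rewrite the wave equation in terms of the second fderiv
  have hu_diff : ∀ w : ℝ × ℝ, Differentiable ℝ (fun q => fderiv ℝ X q w) := fun w q =>
    (hasFDerivAt_apply_fderiv X hDd w q).differentiableAt
  have hptX : pt X = fun q => fderiv ℝ X q (1, 0) := funext (pt_eq X hXd)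
  have hpsX : ps X = fun q => fderiv ℝ X q (0, 1) := funext (ps_eq X hXd)
  have hwave' : ∀ p : ℝ × ℝ,
      fderiv ℝ (fderiv ℝ X) p (1, 0) (1, 0) = κ ^ 2 • fderiv ℝ (fderiv ℝ X) p (0, 1) (0, 1) := by
    intro p
    have h1 : pt (pt X) p = fderiv ℝ (fderiv ℝ X) p (1, 0) (1, 0) := by
      rw [hptX, pt_eq _ (hu_diff (1, 0)) p,
        (hasFDerivAt_apply_fderiv X hDd (1, 0) p).fderiv]
      rfl
    have h2 : ps (ps X) p = fderiv ℝ (fderiv ℝ X) p (0, 1) (0, 1) := by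
      rw [hpsX, ps_eq _ (hu_diff (0, 1)) p,
        (hasFDerivAt_apply_fderiv X hDd (0, 1) p).fderiv]
      rfl
    rw [← h1, ← h2]; exact hwave p
  -- combine directions
  have hcomb : ∀ (ε : ℝ) (q : ℝ × ℝ),
      pt X q + (ε * κ) • ps X q = fderiv ℝ X q (1, ε * κ) := by
    intro ε q
    rw [hptX, hpsX]
    have : ((1 : ℝ), ε * κ) = (1, 0) + (ε * κ) • ((0 : ℝ), (1 : ℝ)) := by
      simp [Prod.ext_iff]
    rw [this, map_add, map_smul]
  intro p
  constructor
  · have h := key κ 1 (by norm_num) X hX hwave' p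
    have e1 : pt X p + κ • ps X p = fderiv ℝ X p (1, 1 * κ) := by
      simpa using hcomb 1 p
    have e2 : pt X (0, p.2 + 1 * κ * p.1) + κ • ps X (0, p.2 + 1 * κ * p.1)
        = fderiv ℝ X (0, p.2 + 1 * κ * p.1) (1, 1 * κ) := by
      simpa using hcomb 1 (0, p.2 + 1 * κ * p.1)
    rw [e1, h, ← e2]
    exact hplus0 _
  · have h := key κ (-1) (by norm_num) X hX hwave' p
    have e1 : pt X p - κ • ps X p = fderiv ℝ X p (1, -1 * κ) := by
      have := hcomb (-1) p
      rw [← this]; module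
    have e2 : pt X (0, p.2 + -1 * κ * p.1) - κ • ps X (0, p.2 + -1 * κ * p.1)
        = fderiv ℝ X (0, p.2 + -1 * κ * p.1) (1, -1 * κ) := by
      have := hcomb (-1) (0, p.2 + -1 * κ * p.1)
      rw [← this]; module
    rw [e1, h, ← e2]
    exact hminus0 _
end

section
/- Let d ≥ 1 and 0 < κ < 1, and set c = √(1 − κ²)/(2κ). Let (Xₙ) be a sequence of C² functions Xₙ : ℝ² → ℝ^d with Xₙ(0,0) = 0, satisfying the wave equation ∂ₜₜXₙ = κ²∂ₛₛXₙ on ℝ² and the constraint |∂ₜXₙ ± κ∂ₛXₙ|² = 1 − κ² everywhere (both signs). If Xₙ converges to a function X : ℝ² → ℝ^d uniformly on every compact subset of ℝ², then there exist Lipschitz functions F, G : ℝ → ℝ^d, each with Lipschitz constant at most c, with F(0) + G(0) = 0, such that X(t,s) = F(s + κt) + G(s − κt) for all (t,s) ∈ ℝ². -/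
open scoped RealInnerProductSpace

section Aux
variable {E : Type*} [NormedAddCommGroup E] [NormedSpace ℝ E]

lemma pt_eq_s4 {Z : ℝ × ℝ → E} {p : ℝ × ℝ} (hZ : DifferentiableAt ℝ Z p) :
    pt Z p = fderiv ℝ Z p (1, 0) := by
  have h1 : HasDerivAt (fun t : ℝ => (t, p.2)) ((1 : ℝ), (0 : ℝ)) p.1 := by
    simpa using (hasDerivAt_id p.1).prodMk (hasDerivAt_const p.1 p.2)
  have h2 : HasDerivAt (fun t => Z (t, p.2)) (fderiv ℝ Z p (1, 0)) p.1 := by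
    have h3 : HasFDerivAt Z (fderiv ℝ Z p) (p.1, p.2) := by
      simpa using hZ.hasFDerivAt
    exact h3.comp_hasDerivAt p.1 h1
  exact h2.deriv

lemma ps_eq_s4 {Z : ℝ × ℝ → E} {p : ℝ × ℝ} (hZ : DifferentiableAt ℝ Z p) :
    ps Z p = fderiv ℝ Z p (0, 1) := by
  have h1 : HasDerivAt (fun s : ℝ => (p.1, s)) ((0 : ℝ), (1 : ℝ)) p.2 := by
    simpa using (hasDerivAt_const p.2 p.1).prodMk (hasDerivAt_id p.2)
  have h2 : HasDerivAt (fun s => Z (p.1, s)) (fderiv ℝ Z p (0, 1)) p.2 := by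
    have h3 : HasFDerivAt Z (fderiv ℝ Z p) (p.1, p.2) := by
      simpa using hZ.hasFDerivAt
    exact h3.comp_hasDerivAt p.2 h1
  exact h2.deriv

variable {κ : ℝ} {Z : ℝ × ℝ → E}

lemma fderiv_vp {p : ℝ × ℝ} (hd : DifferentiableAt ℝ Z p) :
    fderiv ℝ Z p (1, κ) = pt Z p + κ • ps Z p := by
  rw [pt_eq_s4 hd, ps_eq_s4 hd]
  have hv : ((1 : ℝ), κ) = ((1 : ℝ), (0 : ℝ)) + κ • ((0 : ℝ), (1 : ℝ)) := by
    simp [Prod.ext_iff]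
  rw [hv, map_add, map_smul]

lemma fderiv_vm {p : ℝ × ℝ} (hd : DifferentiableAt ℝ Z p) :
    fderiv ℝ Z p (1, -κ) = pt Z p - κ • ps Z p := by
  rw [pt_eq_s4 hd, ps_eq_s4 hd]
  have hv : ((1 : ℝ), -κ) = ((1 : ℝ), (0 : ℝ)) - κ • ((0 : ℝ), (1 : ℝ)) := by
    simp [Prod.ext_iff]
  rw [hv, map_sub, map_smul]

lemma apply_hasFDerivAt (hZ : ContDiff ℝ 2 Z) (v : ℝ × ℝ) (p : ℝ × ℝ) :
    HasFDerivAt (fun q => fderiv ℝ Z q v)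
      ((ContinuousLinearMap.apply ℝ E v).comp (fderiv ℝ (fderiv ℝ Z) p)) p := by
  have hD : ContDiff ℝ 1 (fderiv ℝ Z) := hZ.fderiv_right (by norm_num)
  exact (ContinuousLinearMap.apply ℝ E v).hasFDerivAt.comp p
    (hD.differentiable one_ne_zero p).hasFDerivAt

lemma mixed_zero (hZ : ContDiff ℝ 2 Z)
    (hw : ∀ p : ℝ × ℝ, pt (pt Z) p = κ ^ 2 • ps (ps Z) p) (p : ℝ × ℝ) :
    fderiv ℝ (fderiv ℝ Z) p ((1 : ℝ), κ) ((1 : ℝ), -κ) = 0 := by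
  have hdiff : Differentiable ℝ Z := hZ.differentiable two_ne_zero
  have hD : ContDiff ℝ 1 (fderiv ℝ Z) := hZ.fderiv_right (by norm_num)
  set f2 := fderiv ℝ (fderiv ℝ Z) with hf2
  have hsymm : ∀ v w : ℝ × ℝ, f2 p v w = f2 p w v := fun v w =>
    second_derivative_symmetric (fun y => (hdiff y).hasFDerivAt)
      ((hD.differentiable one_ne_zero p).hasFDerivAt) v w
  have hptZ : pt Z = fun q => fderiv ℝ Z q ((1 : ℝ), (0 : ℝ)) :=
    funext fun q => pt_eq_s4 (hdiff q)
  have hpsZ : ps Z = fun q => fderiv ℝ Z q ((0 : ℝ), (1 : ℝ)) :=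
    funext fun q => ps_eq_s4 (hdiff q)
  have hptpt : pt (pt Z) p = f2 p (1, 0) (1, 0) := by
    rw [hptZ, pt_eq_s4 (apply_hasFDerivAt hZ _ p).differentiableAt,
      (apply_hasFDerivAt hZ _ p).fderiv]
    rfl
  have hpsps : ps (ps Z) p = f2 p (0, 1) (0, 1) := by
    rw [hpsZ, ps_eq_s4 (apply_hasFDerivAt hZ _ p).differentiableAt,
      (apply_hasFDerivAt hZ _ p).fderiv]
    rfl
  have hwave : f2 p (1, 0) (1, 0) = κ ^ 2 • f2 p (0, 1) (0, 1) := by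
    rw [← hptpt, ← hpsps]; exact hw p
  have hvp : ((1 : ℝ), κ) = ((1 : ℝ), (0 : ℝ)) + κ • ((0 : ℝ), (1 : ℝ)) := by
    simp [Prod.ext_iff]
  have hvm : ((1 : ℝ), -κ) = ((1 : ℝ), (0 : ℝ)) - κ • ((0 : ℝ), (1 : ℝ)) := by
    simp [Prod.ext_iff]
  rw [hvp, hvm]
  simp only [map_add, map_sub, map_smul, ContinuousLinearMap.add_apply,
    ContinuousLinearMap.sub_apply, ContinuousLinearMap.smul_apply, ContinuousLinearMap.coe_smul',
    Pi.smul_apply]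
  rw [hsymm (0, 1) (1, 0), hwave]
  module

lemma para (hZ : ContDiff ℝ 2 Z)
    (hw : ∀ p : ℝ × ℝ, pt (pt Z) p = κ ^ 2 • ps (ps Z) p) (a b : ℝ) :
    Z (a • ((1 : ℝ), κ) + b • ((1 : ℝ), -κ)) + Z 0
      = Z (a • ((1 : ℝ), κ)) + Z (b • ((1 : ℝ), -κ)) := by
  have hdiff : Differentiable ℝ Z := hZ.differentiable two_ne_zero
  set vp : ℝ × ℝ := (1, κ) with hvp
  set vm : ℝ × ℝ := (1, -κ) with hvm
  have hconst : ∀ x : ℝ × ℝ, ∀ r : ℝ, fderiv ℝ Z (x + r • vp) vm = fderiv ℝ Z x vm := by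
    intro x r
    have hφ : ∀ r : ℝ, HasDerivAt (fun r : ℝ => fderiv ℝ Z (x + r • vp) vm)
        (fderiv ℝ (fderiv ℝ Z) (x + r • vp) vp vm) r := by
      intro r
      have hin : HasDerivAt (fun r : ℝ => x + r • vp) vp r := by
        simpa using ((hasDerivAt_id r).smul_const vp).const_add x
      exact (apply_hasFDerivAt hZ vm (x + r • vp)).comp_hasDerivAt r hin
    have := is_const_of_deriv_eq_zero (f := fun r : ℝ => fderiv ℝ Z (x + r • vp) vm)
      (fun r => (hφ r).differentiableAt)
      (fun r => by rw [(hφ r).deriv]; exact mixed_zero hZ hw _) r 0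
    simpa using this
  have hZline : ∀ (q : ℝ × ℝ) (b : ℝ), HasDerivAt (fun b : ℝ => Z (q + b • vm))
      (fderiv ℝ Z (q + b • vm) vm) b := by
    intro q b
    have hin : HasDerivAt (fun b : ℝ => q + b • vm) vm b := by
      simpa using ((hasDerivAt_id b).smul_const vm).const_add q
    exact (hdiff (q + b • vm)).hasFDerivAt.comp_hasDerivAt b hin
  have hh : ∀ b : ℝ, HasDerivAt (fun b : ℝ => Z (a • vp + b • vm) - Z (0 + b • vm))
      (fderiv ℝ Z (a • vp + b • vm) vm - fderiv ℝ Z (0 + b • vm) vm) b := by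
    intro b
    exact ((hZline (a • vp) b).sub (hZline 0 b))
  have hkey := is_const_of_deriv_eq_zero
      (f := fun b : ℝ => Z (a • vp + b • vm) - Z (0 + b • vm))
      (fun b => (hh b).differentiableAt)
      (fun b => by
        rw [(hh b).deriv]
        have h1 : a • vp + b • vm = (0 + b • vm) + a • vp := by abel
        rw [h1, hconst (0 + b • vm) a, sub_self]) b 0
  have hkey' : Z (a • vp + b • vm) - Z (b • vm) = Z (a • vp) - Z 0 := by
    simpa using hkey
  have := hkey'
  abel_nf at this ⊢
  linear_combination (norm := abel) this

end Aux

/-- A locally uniform limit of relativistic strings (solutions of the wave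
equation with the relativistic constraint) is a "subrelativistic" string: it has
the d'Alembert form `X(t,s) = F(s + κt) + G(s - κt)` with `F`, `G` Lipschitz of
constant at most `c = √(1 - κ²)/(2κ)`. -/
theorem statement4 (d : ℕ) (hd : 1 ≤ d) (κ : ℝ) (hκ0 : 0 < κ) (hκ1 : κ < 1)
    (c : ℝ) (hc : c = Real.sqrt (1 - κ ^ 2) / (2 * κ))
    (X : ℕ → ℝ × ℝ → EuclideanSpace ℝ (Fin d))
    (hC2 : ∀ n, ContDiff ℝ 2 (X n))
    (hnorm : ∀ n, X n (0, 0) = 0)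
    (hwave : ∀ n, ∀ p : ℝ × ℝ, pt (pt (X n)) p = κ ^ 2 • ps (ps (X n)) p)
    (hplus : ∀ n, ∀ p : ℝ × ℝ, ‖pt (X n) p + κ • ps (X n) p‖ ^ 2 = 1 - κ ^ 2)
    (hminus : ∀ n, ∀ p : ℝ × ℝ, ‖pt (X n) p - κ • ps (X n) p‖ ^ 2 = 1 - κ ^ 2)
    (Xlim : ℝ × ℝ → EuclideanSpace ℝ (Fin d))
    (hconv : ∀ K : Set (ℝ × ℝ), IsCompact K →
      TendstoUniformlyOn X Xlim Filter.atTop K) :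
    ∃ F G : ℝ → EuclideanSpace ℝ (Fin d),
      LipschitzWith (Real.toNNReal c) F ∧
      LipschitzWith (Real.toNNReal c) G ∧
      F 0 + G 0 = 0 ∧
      ∀ t s : ℝ, Xlim (t, s) = F (s + κ * t) + G (s - κ * t) := by
  have hκ2 : (0 : ℝ) < 2 * κ := by linarith
  have hsq : (0 : ℝ) ≤ 1 - κ ^ 2 := by nlinarith
  have hc0 : 0 ≤ c := by rw [hc]; positivity
  set vp : ℝ × ℝ := (1, κ) with hvp
  set vm : ℝ × ℝ := (1, -κ) with hvm
  set Fn : ℕ → ℝ → EuclideanSpace ℝ (Fin d) :=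
    fun n u => X n ((u / (2 * κ)) • vp) with hFn
  set Gn : ℕ → ℝ → EuclideanSpace ℝ (Fin d) :=
    fun n u => X n ((-(u / (2 * κ))) • vm) with hGn
  have hzero : ∀ n, X n 0 = 0 := by
    intro n
    have : ((0 : ℝ × ℝ)) = ((0 : ℝ), (0 : ℝ)) := rfl
    rw [this]; exact hnorm n
  -- representation for each n
  have hrep : ∀ n, ∀ t s : ℝ, X n (t, s) = Fn n (s + κ * t) + Gn n (s - κ * t) := by
    intro n t s
    have h := para (hC2 n) (hwave n) ((s + κ * t) / (2 * κ)) (-((s - κ * t) / (2 * κ)))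
    have hpt : ((s + κ * t) / (2 * κ)) • vp + (-((s - κ * t) / (2 * κ))) • vm = (t, s) := by
      rw [hvp, hvm]
      simp only [Prod.smul_mk, Prod.mk_add_mk, Prod.mk.injEq, smul_eq_mul]
      constructor <;> field_simp <;> ring
    rw [hpt, hzero n, add_zero] at h
    rw [h, hFn, hGn]
  -- derivative of Fn
  have hFder : ∀ n, ∀ u : ℝ, HasDerivAt (Fn n)
      ((1 / (2 * κ)) • (pt (X n) ((u / (2 * κ)) • vp) + κ • ps (X n) ((u / (2 * κ)) • vp))) u := by
    intro n u
    have h1 : HasDerivAt (fun u : ℝ => u / (2 * κ)) (1 / (2 * κ)) u :=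
      (hasDerivAt_id u).div_const (2 * κ)
    have hin : HasDerivAt (fun u : ℝ => (u / (2 * κ)) • vp) ((1 / (2 * κ)) • vp) u :=
      h1.smul_const vp
    have hD := ((hC2 n).differentiable two_ne_zero
      ((u / (2 * κ)) • vp)).hasFDerivAt.comp_hasDerivAt u hin
    have hval : fderiv ℝ (X n) ((u / (2 * κ)) • vp) ((1 / (2 * κ)) • vp)
        = (1 / (2 * κ)) • (pt (X n) ((u / (2 * κ)) • vp) + κ • ps (X n) ((u / (2 * κ)) • vp)) := by
      rw [map_smul, fderiv_vp (κ := κ) ((hC2 n).differentiable two_ne_zero ((u / (2 * κ)) • vp))]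
    rw [hval] at hD
    exact hD
  have hGder : ∀ n, ∀ u : ℝ, HasDerivAt (Gn n)
      ((-(1 / (2 * κ))) • (pt (X n) ((-(u / (2 * κ))) • vm)
        - κ • ps (X n) ((-(u / (2 * κ))) • vm))) u := by
    intro n u
    have h1 : HasDerivAt (fun u : ℝ => -(u / (2 * κ))) (-(1 / (2 * κ))) u :=
      ((hasDerivAt_id u).div_const (2 * κ)).neg
    have hin : HasDerivAt (fun u : ℝ => (-(u / (2 * κ))) • vm) ((-(1 / (2 * κ))) • vm) u :=
      h1.smul_const vm
    have hD := ((hC2 n).differentiable two_ne_zero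
      ((-(u / (2 * κ))) • vm)).hasFDerivAt.comp_hasDerivAt u hin
    have hval : fderiv ℝ (X n) ((-(u / (2 * κ))) • vm) ((-(1 / (2 * κ))) • vm)
        = (-(1 / (2 * κ))) • (pt (X n) ((-(u / (2 * κ))) • vm)
            - κ • ps (X n) ((-(u / (2 * κ))) • vm)) := by
      rw [map_smul,
        fderiv_vm (κ := κ) ((hC2 n).differentiable two_ne_zero ((-(u / (2 * κ))) • vm))]
    rw [hval] at hD
    exact hD
  -- Lipschitz bounds
  have hnormF : ∀ n u, ‖deriv (Fn n) u‖ = c := by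
    intro n u
    rw [(hFder n u).deriv, norm_smul]
    have hn : ‖pt (X n) ((u / (2 * κ)) • vp) + κ • ps (X n) ((u / (2 * κ)) • vp)‖
        = Real.sqrt (1 - κ ^ 2) := by
      rw [← Real.sqrt_sq (norm_nonneg _), hplus n _]
    rw [hn, hc, Real.norm_eq_abs, abs_of_pos (by positivity)]
    field_simp
  have hnormG : ∀ n u, ‖deriv (Gn n) u‖ = c := by
    intro n u
    rw [(hGder n u).deriv, norm_smul]
    have hn : ‖pt (X n) ((-(u / (2 * κ))) • vm) - κ • ps (X n) ((-(u / (2 * κ))) • vm)‖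
        = Real.sqrt (1 - κ ^ 2) := by
      rw [← Real.sqrt_sq (norm_nonneg _), hminus n _]
    rw [hn, hc, Real.norm_eq_abs, abs_neg, abs_of_pos (by positivity)]
    field_simp
  have hFnLip : ∀ n, LipschitzWith (Real.toNNReal c) (Fn n) := by
    intro n
    apply lipschitzWith_of_nnnorm_deriv_le (fun u => (hFder n u).differentiableAt)
    intro u
    rw [← NNReal.coe_le_coe, coe_nnnorm, Real.coe_toNNReal c hc0, hnormF n u]
  have hGnLip : ∀ n, LipschitzWith (Real.toNNReal c) (Gn n) := by
    intro n
    apply lipschitzWith_of_nnnorm_deriv_le (fun u => (hGder n u).differentiableAt)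
    intro u
    rw [← NNReal.coe_le_coe, coe_nnnorm, Real.coe_toNNReal c hc0, hnormG n u]
  -- pointwise convergence
  have hptw : ∀ p : ℝ × ℝ, Filter.Tendsto (fun n => X n p) Filter.atTop (nhds (Xlim p)) := by
    intro p
    exact (hconv {p} isCompact_singleton).tendsto_at (Set.mem_singleton p)
  set F : ℝ → EuclideanSpace ℝ (Fin d) := fun u => Xlim ((u / (2 * κ)) • vp) with hF
  set G : ℝ → EuclideanSpace ℝ (Fin d) := fun u => Xlim ((-(u / (2 * κ))) • vm) with hG
  have hFt : ∀ u, Filter.Tendsto (fun n => Fn n u) Filter.atTop (nhds (F u)) :=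
    fun u => hptw _
  have hGt : ∀ u, Filter.Tendsto (fun n => Gn n u) Filter.atTop (nhds (G u)) :=
    fun u => hptw _
  refine ⟨F, G, ?_, ?_, ?_, ?_⟩
  · apply LipschitzWith.of_dist_le_mul
    intro u v
    have htend : Filter.Tendsto (fun n => dist (Fn n u) (Fn n v)) Filter.atTop
        (nhds (dist (F u) (F v))) := (hFt u).dist (hFt v)
    exact le_of_tendsto htend (Filter.Eventually.of_forall fun n => (hFnLip n).dist_le_mul u v)
  · apply LipschitzWith.of_dist_le_mul
    intro u v
    have htend : Filter.Tendsto (fun n => dist (Gn n u) (Gn n v)) Filter.atTop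
        (nhds (dist (G u) (G v))) := (hGt u).dist (hGt v)
    exact le_of_tendsto htend (Filter.Eventually.of_forall fun n => (hGnLip n).dist_le_mul u v)
  · have h0 : Xlim (0, 0) = 0 := by
      refine tendsto_nhds_unique (hptw (0, 0)) ?_
      simp only [hnorm]
      exact tendsto_const_nhds
    have hF0 : F 0 = Xlim (0, 0) := by
      rw [hF]; simp only []; norm_num; rfl
    have hG0 : G 0 = Xlim (0, 0) := by
      rw [hG]; simp only []; norm_num; rfl
    rw [hF0, hG0, h0, add_zero]
  · intro t s
    refine tendsto_nhds_unique (hptw (t, s)) ?_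
    have : Filter.Tendsto (fun n => Fn n (s + κ * t) + Gn n (s - κ * t)) Filter.atTop
        (nhds (F (s + κ * t) + G (s - κ * t))) := (hFt _).add (hGt _)
    simpa [← hrep] using this
end

section
/- Let d ≥ 1 and 0 < κ < 1, and set c = √(1 − κ²)/(2κ). Let F, G : ℝ → ℝ^d be Lipschitz with Lipschitz constant at most c and F(0) + G(0) = 0, and define X(t,s) = F(s + κt) + G(s − κt). Then there exist sequences of Lipschitz functions Fₙ, Gₙ : ℝ → ℝ^d with Fₙ(0) + Gₙ(0) = 0 and |Fₙ′(y)| = |Gₙ′(y)| = c for almost every y ∈ ℝ, such that the functions Xₙ(t,s) = Fₙ(s + κt) + Gₙ(s − κt) converge to X uniformly on every compact subset of ℝ². (In particular every subrelativistic string is a locally uniform limit of relativistic strings.) -/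
section Aux

variable {E : Type*} [NormedAddCommGroup E] [NormedSpace ℝ E]

open Classical in
/-- Unit direction of `v`, defaulting to `e` when `v = 0`. -/
noncomputable def sdir (e v : E) : E := if v = 0 then e else ‖v‖⁻¹ • v

lemma norm_sdir (e v : E) (he : ‖e‖ = 1) : ‖sdir e v‖ = 1 := by
  unfold sdir; split
  · exact he
  · rename_i hv
    rw [norm_smul, norm_inv, norm_norm, inv_mul_cancel₀ (norm_ne_zero_iff.2 hv)]

lemma smul_sdir (e v : E) : ‖v‖ • sdir e v = v := by
  unfold sdir; split
  · rename_i h; simp [h]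
  · rename_i h
    rw [smul_smul, mul_inv_cancel₀ (norm_ne_zero_iff.2 h), one_smul]

/-- Tent profile: goes up at speed `c`, then down, hitting `L` at time `h`. -/
noncomputable def tent (c L h τ : ℝ) : ℝ := min (c * τ) (L + c * (h - τ))

lemma tent_zero {c L h : ℝ} (hL : 0 ≤ L) (hch : 0 ≤ c * h) : tent c L h 0 = 0 := by
  unfold tent
  rw [mul_zero, min_eq_left]
  nlinarith

lemma tent_h {c L h : ℝ} (hL : L ≤ c * h) : tent c L h h = L := by
  unfold tent
  rw [sub_self, mul_zero, add_zero, min_eq_right hL]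

lemma tent_lip {c : ℝ} (hc : 0 ≤ c) (L h τ τ' : ℝ) :
    |tent c L h τ - tent c L h τ'| ≤ c * |τ - τ'| := by
  unfold tent
  refine (abs_min_sub_min_le_max _ _ _ _).trans ?_
  rw [max_le_iff]
  constructor
  · rw [← mul_sub, abs_mul, abs_of_nonneg hc]
  · have : L + c * (h - τ) - (L + c * (h - τ')) = c * (τ' - τ) := by ring
    rw [this, abs_mul, abs_of_nonneg hc, abs_sub_comm]

lemma tent_nonneg {c L h τ : ℝ} (hc : 0 ≤ c) (hL : 0 ≤ L) (h0 : 0 ≤ τ) (hτ : τ ≤ h) :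
    0 ≤ tent c L h τ := by
  unfold tent
  rw [le_min_iff]
  constructor <;> nlinarith

lemma tent_le {c L h τ : ℝ} : tent c L h τ ≤ c * τ := min_le_left _ _

/-- The zigzag replacement of `F` on the grid interval `[h k, h k + h]`. -/
noncomputable def piece (F : ℝ → E) (c h : ℝ) (e : E) (k : ℤ) (y : ℝ) : E :=
  F (h * k) + tent c ‖F (h * k + h) - F (h * k)‖ h (y - h * k) •
    sdir e (F (h * k + h) - F (h * k))

/-- The global zigzag approximation of `F` with grid size `h`. -/
noncomputable def zig (F : ℝ → E) (c h : ℝ) (e : E) (y : ℝ) : E :=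
  piece F c h e ⌊y / h⌋ y

variable {F : ℝ → E} {c h : ℝ} {e : E}

lemma piece_lip (he : ‖e‖ = 1) (hc : 0 ≤ c) (k : ℤ) (y y' : ℝ) :
    ‖piece F c h e k y - piece F c h e k y'‖ ≤ c * |y - y'| := by
  unfold piece
  rw [add_sub_add_left_eq_sub, ← sub_smul, norm_smul, norm_sdir _ _ he, mul_one,
    Real.norm_eq_abs]
  have := tent_lip hc ‖F (h * k + h) - F (h * k)‖ h (y - h * k) (y' - h * k)
  simpa using this

lemma piece_left (hc : 0 ≤ c) (hh : 0 ≤ h) (k : ℤ) :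
    piece F c h e k (h * k) = F (h * k) := by
  unfold piece
  rw [sub_self, tent_zero (norm_nonneg _) (mul_nonneg hc hh), zero_smul, add_zero]

lemma piece_right (hh : 0 ≤ h)
    (hF : ∀ s t : ℝ, ‖F t - F s‖ ≤ c * |t - s|) (k : ℤ) :
    piece F c h e k (h * k + h) = F (h * k + h) := by
  have hL : ‖F (h * k + h) - F (h * k)‖ ≤ c * h := by
    have := hF (h * k) (h * k + h)
    simpa [abs_of_nonneg hh] using this
  unfold piece
  rw [add_sub_cancel_left, tent_h hL, smul_sdir, add_sub_cancel]

lemma zig_eq_piece (hc : 0 ≤ c) (hh : 0 < h)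
    (hF : ∀ s t : ℝ, ‖F t - F s‖ ≤ c * |t - s|) {k : ℤ} {y : ℝ}
    (h1 : h * k ≤ y) (h2 : y ≤ h * k + h) :
    zig F c h e y = piece F c h e k y := by
  rcases eq_or_lt_of_le h2 with h2 | h2
  · subst h2
    have hk : (h * k + h) / h = ((k + 1 : ℤ) : ℝ) := by
      push_cast; field_simp
    unfold zig
    rw [hk, Int.floor_intCast, piece_right hh.le hF]
    have h3 : (h * (k : ℝ) + h) = h * ((k + 1 : ℤ) : ℝ) := by push_cast; ring
    rw [h3, piece_left hc hh.le, ← h3]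
  · have hk : ⌊y / h⌋ = k := by
      rw [Int.floor_eq_iff]
      constructor
      · rw [le_div_iff₀ hh]; linarith
      · rw [div_lt_iff₀ hh]; linarith
    unfold zig
    rw [hk]

lemma zig_grid (hc : 0 ≤ c) (hh : 0 < h)
    (hF : ∀ s t : ℝ, ‖F t - F s‖ ≤ c * |t - s|) (k : ℤ) :
    zig F c h e (h * k) = F (h * k) := by
  rw [zig_eq_piece hc hh hF le_rfl (by linarith), piece_left hc hh.le]

lemma zig_lip_le (he : ‖e‖ = 1) (hc : 0 ≤ c) (hh : 0 < h)
    (hF : ∀ s t : ℝ, ‖F t - F s‖ ≤ c * |t - s|) :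
    ∀ x y : ℝ, x ≤ y → ‖zig F c h e y - zig F c h e x‖ ≤ c * (y - x) := by
  suffices H : ∀ n : ℕ, ∀ x y : ℝ, x ≤ y → (⌊y / h⌋ - ⌊x / h⌋).toNat = n →
      ‖zig F c h e y - zig F c h e x‖ ≤ c * (y - x) by
    intro x y hxy
    exact H _ x y hxy rfl
  intro n
  induction n with
  | zero =>
    intro x y hxy hn
    have hmono : ⌊x / h⌋ ≤ ⌊y / h⌋ := Int.floor_le_floor (by gcongr)
    have heq : ⌊y / h⌋ = ⌊x / h⌋ := by omega
    have hx1 : h * (⌊x / h⌋ : ℝ) ≤ x := by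
      have h1 : h * ((⌊x / h⌋ : ℝ)) ≤ h * (x / h) :=
        mul_le_mul_of_nonneg_left (Int.floor_le _) hh.le
      rwa [mul_div_cancel₀ _ hh.ne'] at h1
    have hy2 : y ≤ h * (⌊x / h⌋ : ℝ) + h := by
      have h1 : y / h < (⌊y / h⌋ : ℝ) + 1 := Int.lt_floor_add_one _
      rw [heq] at h1
      have h2 : y < h * ((⌊x / h⌋ : ℝ) + 1) := by
        have := mul_lt_mul_of_pos_left h1 hh
        rwa [mul_div_cancel₀ _ hh.ne'] at this
      linarith
    rw [zig_eq_piece hc hh hF hx1 (hxy.trans hy2),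
      zig_eq_piece hc hh hF (hx1.trans hxy) hy2]
    calc ‖piece F c h e ⌊x / h⌋ y - piece F c h e ⌊x / h⌋ x‖ ≤ c * |y - x| :=
          piece_lip he hc _ y x
      _ = c * (y - x) := by rw [abs_of_nonneg (by linarith)]
  | succ n ih =>
    intro x y hxy hn
    have hmono : ⌊x / h⌋ ≤ ⌊y / h⌋ := Int.floor_le_floor (by gcongr)
    have hky : ⌊x / h⌋ + 1 ≤ ⌊y / h⌋ := by omega
    set k : ℤ := ⌊x / h⌋ with hk
    set b : ℝ := h * ((k : ℝ) + 1) with hb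
    have hx1 : h * (k : ℝ) ≤ x := by
      have h1 : h * ((k : ℝ)) ≤ h * (x / h) :=
        mul_le_mul_of_nonneg_left (Int.floor_le _) hh.le
      rwa [mul_div_cancel₀ _ hh.ne'] at h1
    have hxb : x ≤ b := by
      have h1 : x / h < (k : ℝ) + 1 := Int.lt_floor_add_one _
      have := mul_lt_mul_of_pos_left h1 hh
      rw [mul_div_cancel₀ _ hh.ne'] at this
      exact this.le
    have hby : b ≤ y := by
      have h1 : ((k + 1 : ℤ) : ℝ) ≤ ⌊y / h⌋ := by exact_mod_cast hky
      have h2 : ((k : ℝ) + 1) ≤ y / h := by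
        push_cast at h1
        linarith [Int.floor_le (y / h)]
      have := mul_le_mul_of_nonneg_left h2 hh.le
      rwa [mul_div_cancel₀ _ hh.ne'] at this
    have hbfloor : ⌊b / h⌋ = k + 1 := by
      have : b / h = ((k + 1 : ℤ) : ℝ) := by
        rw [hb]; push_cast; field_simp
      rw [this, Int.floor_intCast]
    have ih' := ih b y hby (by rw [hbfloor]; omega)
    have hbk : b = h * (k : ℝ) + h := by rw [hb]; ring
    have e1 : zig F c h e x = piece F c h e k x :=
      zig_eq_piece hc hh hF hx1 (by linarith)
    have e2 : zig F c h e b = piece F c h e k b :=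
      zig_eq_piece hc hh hF (by linarith) (by linarith)
    have hp : ‖piece F c h e k b - piece F c h e k x‖ ≤ c * (b - x) := by
      calc ‖piece F c h e k b - piece F c h e k x‖ ≤ c * |b - x| := piece_lip he hc _ _ _
        _ = c * (b - x) := by rw [abs_of_nonneg (by linarith)]
    calc ‖zig F c h e y - zig F c h e x‖
        ≤ ‖zig F c h e y - zig F c h e b‖ + ‖zig F c h e b - zig F c h e x‖ :=
          norm_sub_le_norm_sub_add_norm_sub _ _ _
      _ ≤ c * (y - b) + c * (b - x) :=
          add_le_add ih' (by rw [e1, e2]; exact hp)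
      _ = c * (y - x) := by ring

lemma zig_close (he : ‖e‖ = 1) (hc : 0 ≤ c) (hh : 0 < h)
    (hF : ∀ s t : ℝ, ‖F t - F s‖ ≤ c * |t - s|) (y : ℝ) :
    ‖zig F c h e y - F y‖ ≤ 2 * c * h := by
  set k : ℤ := ⌊y / h⌋ with hk
  have hx1 : h * (k : ℝ) ≤ y := by
    have h1 : h * ((k : ℝ)) ≤ h * (y / h) :=
      mul_le_mul_of_nonneg_left (Int.floor_le _) hh.le
    rwa [mul_div_cancel₀ _ hh.ne'] at h1
  have hy2 : y < h * (k : ℝ) + h := by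
    have h1 : y / h < (k : ℝ) + 1 := Int.lt_floor_add_one _
    have := mul_lt_mul_of_pos_left h1 hh
    rw [mul_div_cancel₀ _ hh.ne'] at this
    linarith
  have h1 : ‖zig F c h e y - F (h * k)‖ ≤ c * h := by
    unfold zig piece
    rw [← hk, add_sub_cancel_left, norm_smul, norm_sdir _ _ he, mul_one, Real.norm_eq_abs,
      abs_of_nonneg (tent_nonneg hc (norm_nonneg _) (by linarith) (by linarith))]
    calc tent c ‖F (h * ↑k + h) - F (h * ↑k)‖ h (y - h * ↑k) ≤ c * (y - h * k) := tent_le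
      _ ≤ c * h := by nlinarith
  have h2 : ‖F (h * k) - F y‖ ≤ c * h := by
    calc ‖F (h * k) - F y‖ = ‖F y - F (h * k)‖ := norm_sub_rev _ _
      _ ≤ c * |y - h * k| := hF _ _
      _ ≤ c * h := by rw [abs_of_nonneg (by linarith)]; nlinarith
  calc ‖zig F c h e y - F y‖
      ≤ ‖zig F c h e y - F (h * k)‖ + ‖F (h * k) - F y‖ :=
        norm_sub_le_norm_sub_add_norm_sub _ _ _
    _ ≤ 2 * c * h := by linarith

lemma zig_deriv_ae (he : ‖e‖ = 1) (hc : 0 < c) (hh : 0 < h)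
    (hF : ∀ s t : ℝ, ‖F t - F s‖ ≤ c * |t - s|) :
    ∀ᵐ y : ℝ, ‖deriv (zig F c h e) y‖ = c := by
  set bad : Set ℝ := ⋃ k : ℤ,
    ({h * (k : ℝ), (‖F (h * (k:ℝ) + h) - F (h * (k:ℝ))‖ + c * (2 * (h * (k:ℝ)) + h)) / (2 * c)}
      : Set ℝ) with hbad
  have hcnt : bad.Countable := Set.countable_iUnion fun k =>
    (Set.countable_singleton _).insert _
  have hmeas : MeasureTheory.volume bad = 0 := hcnt.measure_zero _
  have hae : ∀ᵐ y : ℝ, y ∉ bad := MeasureTheory.measure_eq_zero_iff_ae_notMem.mp hmeas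
  filter_upwards [hae] with y hy
  simp only [hbad, Set.mem_iUnion, Set.mem_insert_iff, Set.mem_singleton_iff, not_exists,
    not_or] at hy
  set k : ℤ := ⌊y / h⌋ with hk
  have hy1 : h * (k : ℝ) < y := by
    have h1 : h * ((k : ℝ)) ≤ h * (y / h) :=
      mul_le_mul_of_nonneg_left (Int.floor_le _) hh.le
    rw [mul_div_cancel₀ _ hh.ne'] at h1
    exact lt_of_le_of_ne h1 (fun hcontra => (hy k).1 hcontra.symm)
  have hy2 : y < h * (k : ℝ) + h := by
    have h1 : y / h < (k : ℝ) + 1 := Int.lt_floor_add_one _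
    have := mul_lt_mul_of_pos_left h1 hh
    rw [mul_div_cancel₀ _ hh.ne'] at this
    linarith
  rcases lt_trichotomy (c * (y - h * (k : ℝ)))
      (‖F (h * (k:ℝ) + h) - F (h * (k:ℝ))‖ + c * (h - (y - h * (k : ℝ)))) with hlt | heq | hgt
  · -- ascending branch
    have hsopen : IsOpen (Set.Ioo (h * (k:ℝ)) (h * (k:ℝ) + h) ∩
        {z : ℝ | c * (z - h * (k:ℝ)) <
          ‖F (h * (k:ℝ) + h) - F (h * (k:ℝ))‖ + c * (h - (z - h * (k:ℝ)))}) :=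
      isOpen_Ioo.inter (isOpen_lt (by fun_prop) (by fun_prop))
    have hys : y ∈ Set.Ioo (h * (k:ℝ)) (h * (k:ℝ) + h) ∩
        {z : ℝ | c * (z - h * (k:ℝ)) <
          ‖F (h * (k:ℝ) + h) - F (h * (k:ℝ))‖ + c * (h - (z - h * (k:ℝ)))} :=
      ⟨⟨hy1, hy2⟩, hlt⟩
    have hev : zig F c h e =ᶠ[nhds y]
        (fun z => F (h * (k:ℝ)) + (c * (z - h * (k:ℝ))) •
          sdir e (F (h * (k:ℝ) + h) - F (h * (k:ℝ)))) := by
      filter_upwards [hsopen.mem_nhds hys] with z hz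
      rw [zig_eq_piece hc.le hh hF hz.1.1.le hz.1.2.le]
      unfold piece tent
      rw [min_eq_left hz.2.le]
    have hder : HasDerivAt
        (fun z => F (h * (k:ℝ)) + (c * (z - h * (k:ℝ))) •
          sdir e (F (h * (k:ℝ) + h) - F (h * (k:ℝ))))
        (c • sdir e (F (h * (k:ℝ) + h) - F (h * (k:ℝ)))) y := by
      have h1 : HasDerivAt (fun z : ℝ => c * (z - h * (k:ℝ))) c y := by
        simpa using ((hasDerivAt_id y).sub_const (h * (k:ℝ))).const_mul c
      simpa using (h1.smul_const _).const_add (F (h * (k:ℝ)))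
    rw [hev.deriv_eq, hder.deriv, norm_smul, Real.norm_eq_abs, abs_of_pos hc,
      norm_sdir _ _ he, mul_one]
  · -- the midpoint: excluded
    exfalso
    apply (hy k).2
    rw [eq_div_iff (by positivity : (2 * c) ≠ 0)]
    linear_combination heq
  · -- descending branch
    have hsopen : IsOpen (Set.Ioo (h * (k:ℝ)) (h * (k:ℝ) + h) ∩
        {z : ℝ | ‖F (h * (k:ℝ) + h) - F (h * (k:ℝ))‖ + c * (h - (z - h * (k:ℝ))) <
          c * (z - h * (k:ℝ))}) :=
      isOpen_Ioo.inter (isOpen_lt (by fun_prop) (by fun_prop))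
    have hys : y ∈ Set.Ioo (h * (k:ℝ)) (h * (k:ℝ) + h) ∩
        {z : ℝ | ‖F (h * (k:ℝ) + h) - F (h * (k:ℝ))‖ + c * (h - (z - h * (k:ℝ))) <
          c * (z - h * (k:ℝ))} :=
      ⟨⟨hy1, hy2⟩, hgt⟩
    have hev : zig F c h e =ᶠ[nhds y]
        (fun z => F (h * (k:ℝ)) +
          (‖F (h * (k:ℝ) + h) - F (h * (k:ℝ))‖ + c * (h - (z - h * (k:ℝ)))) •
          sdir e (F (h * (k:ℝ) + h) - F (h * (k:ℝ)))) := by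
      filter_upwards [hsopen.mem_nhds hys] with z hz
      rw [zig_eq_piece hc.le hh hF hz.1.1.le hz.1.2.le]
      unfold piece tent
      rw [min_eq_right hz.2.le]
    have hder : HasDerivAt
        (fun z => F (h * (k:ℝ)) +
          (‖F (h * (k:ℝ) + h) - F (h * (k:ℝ))‖ + c * (h - (z - h * (k:ℝ)))) •
          sdir e (F (h * (k:ℝ) + h) - F (h * (k:ℝ))))
        ((c * (-1)) • sdir e (F (h * (k:ℝ) + h) - F (h * (k:ℝ)))) y := by
      have h1 : HasDerivAt
          (fun z : ℝ => ‖F (h * (k:ℝ) + h) - F (h * (k:ℝ))‖ + c * (h - (z - h * (k:ℝ))))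
          (c * (-1)) y := by
        have h2 : HasDerivAt (fun z : ℝ => h - (z - h * (k:ℝ))) (-1) y := by
          simpa using ((hasDerivAt_id y).sub_const (h * (k:ℝ))).const_sub h
        simpa using (h2.const_mul c).const_add ‖F (h * (k:ℝ) + h) - F (h * (k:ℝ))‖
      simpa using (h1.smul_const _).const_add (F (h * (k:ℝ)))
    rw [hev.deriv_eq, hder.deriv, norm_smul, Real.norm_eq_abs]
    rw [show |c * (-1)| = c by rw [abs_of_nonpos (by linarith)]; ring]
    rw [norm_sdir _ _ he, mul_one]

end Aux
open scoped RealInnerProductSpace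

/-- Every subrelativistic string `X(t,s) = F(s + κt) + G(s - κt)`, with `F`, `G`
Lipschitz of constant at most `c = √(1 - κ²)/(2κ)` and `F(0) + G(0) = 0`, is the
locally uniform limit of relativistic strings `Xₙ(t,s) = Fₙ(s + κt) + Gₙ(s - κt)`
with `|Fₙ'| = |Gₙ'| = c` almost everywhere. -/
theorem statement5 (d : ℕ) (hd : 1 ≤ d) (κ : ℝ) (hκ0 : 0 < κ) (hκ1 : κ < 1)
    (c : ℝ) (hc : c = Real.sqrt (1 - κ ^ 2) / (2 * κ))
    (F G : ℝ → EuclideanSpace ℝ (Fin d))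
    (hF : LipschitzWith (Real.toNNReal c) F)
    (hG : LipschitzWith (Real.toNNReal c) G)
    (hFG0 : F 0 + G 0 = 0)
    (X : ℝ × ℝ → EuclideanSpace ℝ (Fin d))
    (hX : ∀ t s : ℝ, X (t, s) = F (s + κ * t) + G (s - κ * t)) :
    ∃ Fn Gn : ℕ → ℝ → EuclideanSpace ℝ (Fin d),
      (∀ n, LipschitzWith (Real.toNNReal c) (Fn n)) ∧
      (∀ n, LipschitzWith (Real.toNNReal c) (Gn n)) ∧
      (∀ n, Fn n 0 + Gn n 0 = 0) ∧
      (∀ n, ∀ᵐ y : ℝ, ‖deriv (Fn n) y‖ = c ∧ ‖deriv (Gn n) y‖ = c) ∧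
      ∀ K : Set (ℝ × ℝ), IsCompact K →
        TendstoUniformlyOn
          (fun n p => Fn n (p.2 + κ * p.1) + Gn n (p.2 - κ * p.1))
          X Filter.atTop K := by
  have hc2 : 0 < c := by
    rw [hc]
    apply div_pos
    · apply Real.sqrt_pos.2; nlinarith
    · linarith
  set e : EuclideanSpace ℝ (Fin d) := EuclideanSpace.single (⟨0, hd⟩ : Fin d) (1 : ℝ)
    with he'
  have he : ‖e‖ = 1 := by rw [he', EuclideanSpace.norm_single]; norm_num
  have hF' : ∀ s t : ℝ, ‖F t - F s‖ ≤ c * |t - s| := by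
    intro s t
    have := hF.dist_le_mul t s
    rwa [dist_eq_norm, Real.coe_toNNReal c hc2.le, Real.dist_eq] at this
  have hG' : ∀ s t : ℝ, ‖G t - G s‖ ≤ c * |t - s| := by
    intro s t
    have := hG.dist_le_mul t s
    rwa [dist_eq_norm, Real.coe_toNNReal c hc2.le, Real.dist_eq] at this
  set hn : ℕ → ℝ := fun n => 1 / ((n : ℝ) + 1) with hhn
  have hhn0 : ∀ n, 0 < hn n := fun n => by positivity
  have lipZig : ∀ (Fh : ℝ → EuclideanSpace ℝ (Fin d)),
      (∀ s t : ℝ, ‖Fh t - Fh s‖ ≤ c * |t - s|) → ∀ n : ℕ,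
      LipschitzWith (Real.toNNReal c) (zig Fh c (hn n) e) := by
    intro Fh hFh n
    apply LipschitzWith.of_dist_le_mul
    intro x y
    rw [Real.coe_toNNReal c hc2.le, dist_eq_norm, Real.dist_eq]
    rcases le_total x y with hxy | hxy
    · rw [norm_sub_rev, abs_sub_comm, abs_of_nonneg (by linarith)]
      exact zig_lip_le he hc2.le (hhn0 n) hFh x y hxy
    · rw [abs_of_nonneg (by linarith)]
      exact zig_lip_le he hc2.le (hhn0 n) hFh y x hxy
  have zig0 : ∀ (Fh : ℝ → EuclideanSpace ℝ (Fin d)),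
      (∀ s t : ℝ, ‖Fh t - Fh s‖ ≤ c * |t - s|) → ∀ n : ℕ,
      zig Fh c (hn n) e 0 = Fh 0 := by
    intro Fh hFh n
    have := zig_grid (e := e) hc2.le (hhn0 n) hFh 0
    simpa using this
  refine ⟨fun n => zig F c (hn n) e, fun n => zig G c (hn n) e,
    fun n => lipZig F hF' n, fun n => lipZig G hG' n, ?_, ?_, ?_⟩
  · intro n
    show zig F c (hn n) e 0 + zig G c (hn n) e 0 = 0
    rw [zig0 F hF' n, zig0 G hG' n]
    exact hFG0
  · intro n
    exact (zig_deriv_ae he hc2 (hhn0 n) hF').and (zig_deriv_ae he hc2 (hhn0 n) hG')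
  · intro K _
    rw [Metric.tendstoUniformlyOn_iff]
    intro ε hε
    have tends : Filter.Tendsto (fun n : ℕ => 4 * c * hn n) Filter.atTop (nhds 0) := by
      have := tendsto_one_div_add_atTop_nhds_zero_nat.const_mul (4 * c)
      simpa [hhn] using this
    filter_upwards [tends.eventually (gt_mem_nhds hε)] with n hn' p _
    have hXp : X p = F (p.2 + κ * p.1) + G (p.2 - κ * p.1) := by
      rw [← hX p.1 p.2]
    rw [hXp, dist_eq_norm]
    have key : F (p.2 + κ * p.1) + G (p.2 - κ * p.1) -
        (zig F c (hn n) e (p.2 + κ * p.1) + zig G c (hn n) e (p.2 - κ * p.1)) =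
        (F (p.2 + κ * p.1) - zig F c (hn n) e (p.2 + κ * p.1)) +
        (G (p.2 - κ * p.1) - zig G c (hn n) e (p.2 - κ * p.1)) := by
      abel
    rw [key]
    have h1 : ‖F (p.2 + κ * p.1) - zig F c (hn n) e (p.2 + κ * p.1)‖ ≤ 2 * c * hn n := by
      rw [norm_sub_rev]
      exact zig_close he hc2.le (hhn0 n) hF' _
    have h2 : ‖G (p.2 - κ * p.1) - zig G c (hn n) e (p.2 - κ * p.1)‖ ≤ 2 * c * hn n := by
      rw [norm_sub_rev]
      exact zig_close he hc2.le (hhn0 n) hG' _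
    calc ‖_ + _‖ ≤ _ + _ := norm_add_le _ _
      _ ≤ 2 * c * hn n + 2 * c * hn n := add_le_add h1 h2
      _ = 4 * c * hn n := by ring
      _ < ε := hn'
end

section
/- Let d ≥ 1 and Y, Z ∈ ℝ^d. Then the supremum, over all W ∈ ℝ^d such that (1 + |Y|²)(1 − |W|²) + (W·Y)² ≥ 0, of the quantity Z·W + √((1 + |Y|²)(1 − |W|²) + (W·Y)²), equals √(1 + |Y|² + |Z|² + (Y·Z)²). -/
open scoped RealInnerProductSpace

lemma cs2 (x₁ x₂ y₁ y₂ : ℝ) :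
    x₁*y₁ + x₂*y₂ ≤ Real.sqrt (x₁^2+x₂^2) * Real.sqrt (y₁^2+y₂^2) := by
  rw [← Real.sqrt_mul (by positivity)]
  rcases le_total (x₁*y₁ + x₂*y₂) 0 with h|h
  · exact h.trans (Real.sqrt_nonneg _)
  · exact (Real.le_sqrt h (by positivity)).mpr (by nlinarith [sq_nonneg (x₁*y₂ - x₂*y₁)])

lemma key_s10 (B Q c r : ℝ) (hB : 0 ≤ B) (hc : 0 < c) (hQ0 : 0 ≤ Q) (hQc : Q ≤ c)
    (hG : c * r^2 ≤ B * Q) : r + Real.sqrt (c - Q) ≤ Real.sqrt (B + c) := by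
  have hsc : 0 < Real.sqrt c := Real.sqrt_pos.mpr hc
  have h1 : r * Real.sqrt c ≤ Real.sqrt B * Real.sqrt Q := by
    rcases le_total r 0 with h|h
    · have : r * Real.sqrt c ≤ 0 := mul_nonpos_of_nonpos_of_nonneg h hsc.le
      exact this.trans (by positivity)
    · calc r * Real.sqrt c = Real.sqrt (r^2 * c) := by
            rw [Real.sqrt_mul (sq_nonneg r), Real.sqrt_sq h]
        _ ≤ Real.sqrt (B * Q) := Real.sqrt_le_sqrt (by linarith)
        _ = Real.sqrt B * Real.sqrt Q := Real.sqrt_mul hB Q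
  have h2 := cs2 (Real.sqrt B) (Real.sqrt c) (Real.sqrt Q) (Real.sqrt (c - Q))
  rw [Real.sq_sqrt hB, Real.sq_sqrt hc.le, Real.sq_sqrt hQ0,
    Real.sq_sqrt (by linarith : (0:ℝ) ≤ c - Q)] at h2
  rw [show Q + (c - Q) = c by ring] at h2
  have h3 : (r + Real.sqrt (c-Q)) * Real.sqrt c ≤ Real.sqrt (B+c) * Real.sqrt c := by
    nlinarith [Real.sqrt_nonneg (c-Q)]
  exact le_of_mul_le_mul_right h3 hsc

lemma gram (d : ℕ) (Y Z W : EuclideanSpace ℝ (Fin d)) :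
    (1 + ‖Y‖^2) * ⟪Z,W⟫^2
      ≤ (‖Z‖^2 + ⟪Y,Z⟫^2) * ((1 + ‖Y‖^2) * ‖W‖^2 - ⟪Y,W⟫^2) := by
  set c : ℝ := 1 + ‖Y‖^2 with hc_def
  have hc : (0:ℝ) < c := by positivity
  set s : ℝ := Real.sqrt c with hs_def
  have hs : s^2 = c := Real.sq_sqrt hc.le
  have hs1 : (1:ℝ) + s ≠ 0 := by positivity
  set t : ℝ := (1 + s)⁻¹ with ht_def
  have ht : t * (1 + s) = 1 := inv_mul_cancel₀ hs1
  set p : ℝ := ⟪Y,Z⟫ with hp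
  set q : ℝ := ⟪Y,W⟫ with hq
  set r : ℝ := ⟪Z,W⟫ with hr
  have hY2 : ⟪Y,Y⟫ = c - 1 := by rw [real_inner_self_eq_norm_sq]; ring
  have hZZ : ⟪Z,Z⟫ = ‖Z‖^2 := real_inner_self_eq_norm_sq Z
  have hWW : ⟪W,W⟫ = ‖W‖^2 := real_inner_self_eq_norm_sq W
  have hZY : ⟪Z,Y⟫ = p := by rw [real_inner_comm]
  have hWY : ⟪W,Y⟫ = q := by rw [real_inner_comm]
  have hWZ : ⟪W,Z⟫ = r := by rw [real_inner_comm]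
  set X₁ : EuclideanSpace ℝ (Fin d) := s • (Z + p • Y) - (t*(p*c)) • Y with hX1
  set X₂ : EuclideanSpace ℝ (Fin d) := s • W - (t*q) • Y with hX2
  have CS := real_inner_mul_inner_self_le X₁ X₂
  have e1 : ⟪X₁,X₂⟫ = c * r := by
    simp only [hX1, hX2, inner_sub_left, inner_sub_right, inner_add_left, inner_add_right,
      real_inner_smul_left, real_inner_smul_right, hY2, hZZ, hWW, hZY, hWY, hWZ, ← hp, ← hq, ← hr]
    linear_combination (r + p*q - c*p*q*t^2) * hs + (c*p*q*(t*s - t - 1)) * ht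
  have e2 : ⟪X₁,X₁⟫ = c * (‖Z‖^2 + p^2) := by
    simp only [hX1, inner_sub_left, inner_sub_right, inner_add_left, inner_add_right,
      real_inner_smul_left, real_inner_smul_right, hY2, hZZ, hWW, hZY, hWY, hWZ, ← hp, ← hq, ← hr]
    linear_combination (‖Z‖^2 + p^2*(c+1) - p^2*c^2*t^2) * hs + (p^2*c^2*(t*s-t-1)) * ht
  have e3 : ⟪X₂,X₂⟫ = c * ‖W‖^2 - q^2 := by
    simp only [hX2, inner_sub_left, inner_sub_right,
      real_inner_smul_left, real_inner_smul_right, hY2, hWW, hWY, ← hq]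
    linear_combination (‖W‖^2 - q^2*t^2) * hs + (q^2*(t*s - t - 1)) * ht
  rw [e1, e2, e3] at CS
  have h2 : c * (c * r^2) ≤ c * ((‖Z‖^2 + p^2) * (c * ‖W‖^2 - q^2)) := by nlinarith
  exact le_of_mul_le_mul_left h2 hc

/-- The Hamiltonian `h(Y,Z) = √(1 + |Y|² + |Z|² + (Y·Z)²)` is the partial Legendre
transform in `W` of the Nambu–Goto Lagrangian density
`L(Y,W) = -√((1 + |Y|²)(1 - |W|²) + (W·Y)²)`: the supremum of
`Z·W - L(Y,W)` over all admissible `W` equals `h(Y,Z)`. -/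
theorem statement10 (d : ℕ) (hd : 1 ≤ d) (Y Z : EuclideanSpace ℝ (Fin d)) :
    sSup ((fun W : EuclideanSpace ℝ (Fin d) =>
        ⟪Z, W⟫ + Real.sqrt ((1 + ‖Y‖ ^ 2) * (1 - ‖W‖ ^ 2) + ⟪W, Y⟫ ^ 2)) ''
      {W : EuclideanSpace ℝ (Fin d) |
        0 ≤ (1 + ‖Y‖ ^ 2) * (1 - ‖W‖ ^ 2) + ⟪W, Y⟫ ^ 2})
    = Real.sqrt (1 + ‖Y‖ ^ 2 + ‖Z‖ ^ 2 + ⟪Y, Z⟫ ^ 2) := by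
  set c : ℝ := 1 + ‖Y‖^2 with hc_def
  have hc : (0:ℝ) < c := by positivity
  set p : ℝ := ⟪Y,Z⟫ with hp
  set B : ℝ := ‖Z‖^2 + p^2 with hB_def
  have hB : (0:ℝ) ≤ B := by positivity
  have htarget : (1 + ‖Y‖^2 + ‖Z‖^2 + p^2 : ℝ) = B + c := by ring
  rw [htarget]
  set h : ℝ := Real.sqrt (B + c) with hh_def
  have hh2 : h^2 = B + c := Real.sq_sqrt (by positivity)
  have hhpos : 0 < h := Real.sqrt_pos.mpr (by positivity)
  have hhne : h ≠ 0 := hhpos.ne'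
  apply IsGreatest.csSup_eq
  constructor
  · -- membership: W* = h⁻¹ • (Z + p • Y)
    have hY2 : ⟪Y,Y⟫ = c - 1 := by rw [real_inner_self_eq_norm_sq]; ring
    have hZZ : ⟪Z,Z⟫ = ‖Z‖^2 := real_inner_self_eq_norm_sq Z
    have hZY : ⟪Z,Y⟫ = p := by rw [real_inner_comm]
    have e1 : ⟪Z, h⁻¹ • (Z + p • Y)⟫ = B / h := by
      simp only [inner_add_right, real_inner_smul_right, hZZ, hZY, ← hp]
      field_simp
      ring
    have e2 : ⟪h⁻¹ • (Z + p • Y), Y⟫ = p * c / h := by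
      simp only [inner_add_left, real_inner_smul_left, hY2, hZY, ← hp]
      field_simp
      ring
    have e3 : ‖h⁻¹ • (Z + p • Y)‖^2 = (B + p^2*c) / h^2 := by
      rw [← real_inner_self_eq_norm_sq]
      simp only [inner_add_left, inner_add_right, real_inner_smul_left,
        real_inner_smul_right, hY2, hZZ, hZY, ← hp]
      field_simp
      ring
    have e4 : c * (1 - ‖h⁻¹ • (Z + p • Y)‖^2) + ⟪h⁻¹ • (Z + p • Y), Y⟫^2 = (c/h)^2 := by
      rw [e3, e2]
      field_simp
      linear_combination hh2
    refine ⟨h⁻¹ • (Z + p • Y), ?_, ?_⟩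
    · show (0:ℝ) ≤ c * (1 - ‖h⁻¹ • (Z + p • Y)‖^2) + ⟪h⁻¹ • (Z + p • Y), Y⟫^2
      rw [e4]; positivity
    · show ⟪Z, h⁻¹ • (Z + p • Y)⟫
          + Real.sqrt (c * (1 - ‖h⁻¹ • (Z + p • Y)‖^2) + ⟪h⁻¹ • (Z + p • Y), Y⟫^2) = h
      rw [e1, e4, Real.sqrt_sq (by positivity)]
      field_simp
      linear_combination -hh2
  · rintro x ⟨W, hW, rfl⟩
    simp only [Set.mem_setOf_eq] at hW
    have hcomm : ⟪W,Y⟫ = ⟪Y,W⟫ := real_inner_comm Y W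
    set q : ℝ := ⟪Y,W⟫ with hq
    set Q : ℝ := c * ‖W‖^2 - q^2 with hQ_def
    have hG : c * ⟪Z,W⟫^2 ≤ B * Q := gram d Y Z W
    have hQ0 : 0 ≤ Q := by
      have hCS := real_inner_mul_inner_self_le Y W
      rw [real_inner_self_eq_norm_sq, real_inner_self_eq_norm_sq] at hCS
      rw [hQ_def]
      nlinarith [norm_nonneg W, sq_nonneg (‖W‖)]
    have hQc : Q ≤ c := by rw [hcomm] at hW; nlinarith
    show ⟪Z,W⟫ + Real.sqrt (c * (1 - ‖W‖^2) + ⟪W,Y⟫^2) ≤ h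
    have hrw : c * (1 - ‖W‖^2) + ⟪W,Y⟫^2 = c - Q := by rw [hcomm]; ring
    rw [hrw]
    exact key_s10 B Q c ⟪Z,W⟫ hB hc hQ0 hQc hG
end

section
/- Let d ≥ 1 and δ > 0. Let (τ, v, η, ζ) : ℝ² → ℝ × ℝ × ℝ^d × ℝ^d be a C¹ solution of the augmented system ∂ₜτ + v∂ₛτ = τ∂ₛv, ∂ₜv + v∂ₛv = τ∂ₛτ, ∂ₜη + v∂ₛη = −τ∂ₛζ, ∂ₜζ + v∂ₛζ = −τ∂ₛη with τ(t,s) ≥ δ for all (t,s). Suppose ξ : ℝ² → ℝ is a C² function of (t,y) satisfying ∂_yξ(t,y) = τ(t, ξ(t,y)) and ∂ₜξ(t,y) = v(t, ξ(t,y)) for all (t,y) ∈ ℝ². Then ξ satisfies the linear wave equation ∂ₜₜξ = ∂_yyξ on ℝ². -/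
open scoped RealInnerProductSpace

lemma hasDerivAt_fst' {F : Type*} [NormedAddCommGroup F] [NormedSpace ℝ F]
    (f : ℝ × ℝ → F) (a b : ℝ) (hf : DifferentiableAt ℝ f (a, b)) :
    HasDerivAt (fun t => f (t, b)) (fderiv ℝ f (a, b) (1, 0)) a := by
  have h := hf.hasFDerivAt.comp_hasDerivAt a ((hasDerivAt_id a).prodMk (hasDerivAt_const a b))
  simpa [Function.comp_def] using h

lemma hasDerivAt_snd' {F : Type*} [NormedAddCommGroup F] [NormedSpace ℝ F]
    (f : ℝ × ℝ → F) (a b : ℝ) (hf : DifferentiableAt ℝ f (a, b)) :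
    HasDerivAt (fun s => f (a, s)) (fderiv ℝ f (a, b) (0, 1)) b := by
  have h := hf.hasFDerivAt.comp_hasDerivAt b ((hasDerivAt_const b a).prodMk (hasDerivAt_id b))
  simpa [Function.comp_def] using h

lemma pt_eq_s14 {F : Type*} [NormedAddCommGroup F] [NormedSpace ℝ F]
    (f : ℝ × ℝ → F) (p : ℝ × ℝ) (hf : DifferentiableAt ℝ f p) :
    pt f p = fderiv ℝ f p (1, 0) := by
  have := (hasDerivAt_fst' f p.1 p.2 (by simpa using hf)).deriv
  simpa [pt] using this

lemma ps_eq_s14 {F : Type*} [NormedAddCommGroup F] [NormedSpace ℝ F]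
    (f : ℝ × ℝ → F) (p : ℝ × ℝ) (hf : DifferentiableAt ℝ f p) :
    ps f p = fderiv ℝ f p (0, 1) := by
  have := (hasDerivAt_snd' f p.1 p.2 (by simpa using hf)).deriv
  simpa [ps] using this

/-- The Lagrangian change of coordinates `ξ`, defined by `∂_yξ = τ(t, ξ)` and
`∂ₜξ = v(t, ξ)`, satisfies the linear wave equation `∂ₜₜξ = ∂_yyξ`. -/
theorem statement14 (d : ℕ) (hd : 1 ≤ d) (δ : ℝ) (hδ : 0 < δ)
    (τ v : ℝ × ℝ → ℝ) (η ζ : ℝ × ℝ → EuclideanSpace ℝ (Fin d))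
    (hτ : ContDiff ℝ 1 τ) (hv : ContDiff ℝ 1 v)
    (hη : ContDiff ℝ 1 η) (hζ : ContDiff ℝ 1 ζ)
    (h1 : ∀ p : ℝ × ℝ, pt τ p + v p * ps τ p = τ p * ps v p)
    (h2 : ∀ p : ℝ × ℝ, pt v p + v p * ps v p = τ p * ps τ p)
    (h3 : ∀ p : ℝ × ℝ, pt η p + v p • ps η p = -(τ p) • ps ζ p)
    (h4 : ∀ p : ℝ × ℝ, pt ζ p + v p • ps ζ p = -(τ p) • ps η p)
    (hτδ : ∀ p : ℝ × ℝ, δ ≤ τ p)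
    (ξ : ℝ × ℝ → ℝ) (hξ : ContDiff ℝ 2 ξ)
    (hξy : ∀ p : ℝ × ℝ, ps ξ p = τ (p.1, ξ p))
    (hξt : ∀ p : ℝ × ℝ, pt ξ p = v (p.1, ξ p)) :
    ∀ p : ℝ × ℝ, pt (pt ξ) p = ps (ps ξ) p := by
  intro p
  have hξd : Differentiable ℝ ξ := hξ.differentiable two_ne_zero
  have hvd : Differentiable ℝ v := hv.differentiable one_ne_zero
  have hτd : Differentiable ℝ τ := hτ.differentiable one_ne_zero
  set q : ℝ × ℝ := (p.1, ξ p) with hq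
  -- derivative of t ↦ ξ (t, y)
  have keyt : ∀ a b : ℝ, HasDerivAt (fun t => ξ (t, b)) (v (a, ξ (a, b))) a := by
    intro a b
    have h := hasDerivAt_fst' ξ a b (hξd _)
    have he : fderiv ℝ ξ (a, b) (1, 0) = v (a, ξ (a, b)) := by
      rw [← pt_eq_s14 ξ (a, b) (hξd _)]; exact hξt (a, b)
    rwa [he] at h
  have keys : ∀ a b : ℝ, HasDerivAt (fun s => ξ (a, s)) (τ (a, ξ (a, b))) b := by
    intro a b
    have h := hasDerivAt_snd' ξ a b (hξd _)
    have he : fderiv ℝ ξ (a, b) (0, 1) = τ (a, ξ (a, b)) := by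
      rw [← ps_eq_s14 ξ (a, b) (hξd _)]; exact hξy (a, b)
    rwa [he] at h
  have hsplit : ∀ (c : ℝ), ((1 : ℝ), c) = ((1:ℝ), (0:ℝ)) + c • ((0:ℝ), (1:ℝ)) := by
    intro c; simp [Prod.ext_iff]
  have hsplit2 : ∀ (c : ℝ), ((0 : ℝ), c) = c • ((0:ℝ), (1:ℝ)) := by
    intro c; simp [Prod.ext_iff]
  have lhs : pt (pt ξ) p = pt v q + v q * ps v q := by
    have hfun : (fun t => pt ξ (t, p.2)) = fun t => v (t, ξ (t, p.2)) :=
      funext fun t => hξt (t, p.2)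
    rw [pt, hfun]
    have hG : HasDerivAt (fun t => ((t : ℝ), ξ (t, p.2))) (1, v q) p.1 := by
      have := (hasDerivAt_id p.1).prodMk (keyt p.1 p.2)
      simpa [hq] using this
    have hc := (hvd q).hasFDerivAt.comp_hasDerivAt p.1 (by simpa [hq] using hG)
    simp only [Function.comp_def] at hc
    rw [hc.deriv, hsplit (v q), map_add, map_smul,
      ← pt_eq_s14 v q (hvd q), ← ps_eq_s14 v q (hvd q)]
    simp [smul_eq_mul]
  have rhs : ps (ps ξ) p = τ q * ps τ q := by
    have hfun : (fun s => ps ξ (p.1, s)) = fun s => τ (p.1, ξ (p.1, s)) :=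
      funext fun s => hξy (p.1, s)
    rw [ps, hfun]
    have hG : HasDerivAt (fun s => ((p.1 : ℝ), ξ (p.1, s))) (0, τ q) p.2 := by
      have := (hasDerivAt_const p.2 p.1).prodMk (keys p.1 p.2)
      simpa [hq] using this
    have hc := (hτd q).hasFDerivAt.comp_hasDerivAt p.2 (by simpa [hq] using hG)
    simp only [Function.comp_def] at hc
    rw [hc.deriv, hsplit2 (τ q), map_smul, ← ps_eq_s14 τ q (hτd q)]
    simp [smul_eq_mul]
  rw [lhs, rhs]
  exact h2 q
end

section
/- Let d ≥ 1, α ∈ ℝ and 0 < δ < 1. In ℝ × ℝ × ℝ^d × ℝ^d with points U = (τ, v, η, ζ), consider the set M_{α,δ} = {U : δ ≤ τ + (v − α) ≤ 1/δ, δ ≤ τ − (v − α) ≤ 1/δ, (v + τ)² + |η − ζ|² = 1, (v − τ)² + |η + ζ|² = 1}. Then the closed convex hull of M_{α,δ} is exactly the set {U : δ ≤ τ + (v − α) ≤ 1/δ, δ ≤ τ − (v − α) ≤ 1/δ, (v + τ)² + |η − ζ|² ≤ 1, (v − τ)² + |η + ζ|² ≤ 1}. -/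
set_option maxHeartbeats 1000000

open scoped RealInnerProductSpace

lemma aux_sphere17 {d : ℕ} (hd : 1 ≤ d) (x : EuclideanSpace ℝ (Fin d)) (r : ℝ) (hr : ‖x‖ ≤ r) :
    ∃ (u : EuclideanSpace ℝ (Fin d)) (t : ℝ), ‖u‖ = r ∧ 0 ≤ t ∧ t ≤ 1 ∧ t • u + (1 - t) • (-u) = x := by
  have hr0 : 0 ≤ r := le_trans (norm_nonneg x) hr
  by_cases hx : x = 0
  · refine ⟨r • EuclideanSpace.single (⟨0, hd⟩ : Fin d) (1:ℝ), 1/2, ?_, by norm_num, by norm_num, ?_⟩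
    · rw [norm_smul, EuclideanSpace.norm_single]
      simp [abs_of_nonneg hr0]
    · rw [hx]; module
  · have hxn : 0 < ‖x‖ := norm_pos_iff.mpr hx
    have hr0' : 0 < r := lt_of_lt_of_le hxn hr
    refine ⟨(r / ‖x‖) • x, (r + ‖x‖)/(2*r), ?_, by positivity, ?_, ?_⟩
    · rw [norm_smul, Real.norm_eq_abs, abs_of_nonneg (div_nonneg hr0 hxn.le)]
      field_simp
    · rw [div_le_one (by linarith)]; linarith
    · match_scalars
      field_simp
      ring

lemma norm_combo_sq17 {d : ℕ} (p q : ℝ) (x y : EuclideanSpace ℝ (Fin d)) :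
    ‖p • x + q • y‖^2 = p^2*‖x‖^2 + 2*p*q*⟪x,y⟫ + q^2*‖y‖^2 := by
  rw [norm_add_sq_real, real_inner_smul_left, real_inner_smul_right, norm_smul, norm_smul]
  simp [mul_pow, sq_abs]
  ring

/-- The closed convex hull of
`M_{α,δ} = {δ ≤ τ ± (v - α) ≤ 1/δ, (v + τ)² + |η - ζ|² = 1, (v - τ)² + |η + ζ|² = 1}`
is exactly the set where the two equalities are relaxed to inequalities `≤ 1`. -/
theorem statement17 (d : ℕ) (hd : 1 ≤ d) (α : ℝ) (δ : ℝ) (hδ0 : 0 < δ) (hδ1 : δ < 1) :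
    closure (convexHull ℝ
      {U : ℝ × ℝ × EuclideanSpace ℝ (Fin d) × EuclideanSpace ℝ (Fin d) |
        δ ≤ U.1 + (U.2.1 - α) ∧ U.1 + (U.2.1 - α) ≤ 1 / δ ∧
        δ ≤ U.1 - (U.2.1 - α) ∧ U.1 - (U.2.1 - α) ≤ 1 / δ ∧
        (U.2.1 + U.1) ^ 2 + ‖U.2.2.1 - U.2.2.2‖ ^ 2 = 1 ∧
        (U.2.1 - U.1) ^ 2 + ‖U.2.2.1 + U.2.2.2‖ ^ 2 = 1})
    = {U : ℝ × ℝ × EuclideanSpace ℝ (Fin d) × EuclideanSpace ℝ (Fin d) |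
        δ ≤ U.1 + (U.2.1 - α) ∧ U.1 + (U.2.1 - α) ≤ 1 / δ ∧
        δ ≤ U.1 - (U.2.1 - α) ∧ U.1 - (U.2.1 - α) ≤ 1 / δ ∧
        (U.2.1 + U.1) ^ 2 + ‖U.2.2.1 - U.2.2.2‖ ^ 2 ≤ 1 ∧
        (U.2.1 - U.1) ^ 2 + ‖U.2.2.1 + U.2.2.2‖ ^ 2 ≤ 1} := by
  set E := EuclideanSpace ℝ (Fin d)
  set S : Set (ℝ × ℝ × E × E) :=
      {U | δ ≤ U.1 + (U.2.1 - α) ∧ U.1 + (U.2.1 - α) ≤ 1 / δ ∧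
        δ ≤ U.1 - (U.2.1 - α) ∧ U.1 - (U.2.1 - α) ≤ 1 / δ ∧
        (U.2.1 + U.1) ^ 2 + ‖U.2.2.1 - U.2.2.2‖ ^ 2 = 1 ∧
        (U.2.1 - U.1) ^ 2 + ‖U.2.2.1 + U.2.2.2‖ ^ 2 = 1} with hS
  set T : Set (ℝ × ℝ × E × E) :=
      {U | δ ≤ U.1 + (U.2.1 - α) ∧ U.1 + (U.2.1 - α) ≤ 1 / δ ∧
        δ ≤ U.1 - (U.2.1 - α) ∧ U.1 - (U.2.1 - α) ≤ 1 / δ ∧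
        (U.2.1 + U.1) ^ 2 + ‖U.2.2.1 - U.2.2.2‖ ^ 2 ≤ 1 ∧
        (U.2.1 - U.1) ^ 2 + ‖U.2.2.1 + U.2.2.2‖ ^ 2 ≤ 1} with hT
  have hTconv : Convex ℝ T := by
    rintro ⟨τ₁, v₁, η₁, ζ₁⟩ ⟨a1, a2, a3, a4, a5, a6⟩ ⟨τ₂, v₂, η₂, ζ₂⟩ ⟨b1, b2, b3, b4, b5, b6⟩
      p q hp hq hpq
    simp only [hT, Prod.smul_mk, Prod.mk_add_mk, Set.mem_setOf_eq, smul_eq_mul] at *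
    have e1 : p • η₁ + q • η₂ - (p • ζ₁ + q • ζ₂) = p • (η₁ - ζ₁) + q • (η₂ - ζ₂) := by module
    have e2 : p • η₁ + q • η₂ + (p • ζ₁ + q • ζ₂) = p • (η₁ + ζ₁) + q • (η₂ + ζ₂) := by module
    have c1 := real_inner_le_norm (η₁ - ζ₁) (η₂ - ζ₂)
    have c2 := real_inner_le_norm (η₁ + ζ₁) (η₂ + ζ₂)
    have n1 := norm_combo_sq17 p q (η₁ - ζ₁) (η₂ - ζ₂)
    have n2 := norm_combo_sq17 p q (η₁ + ζ₁) (η₂ + ζ₂)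
    have hc1 : p * δ + q * δ = δ := by linear_combination δ * hpq
    have hc2 : p * (1/δ) + q * (1/δ) = 1/δ := by linear_combination (1/δ) * hpq
    have hc3 : p * α + q * α = α := by linear_combination α * hpq
    refine ⟨by nlinarith [mul_le_mul_of_nonneg_left a1 hp, mul_le_mul_of_nonneg_left b1 hq],
      by nlinarith [mul_le_mul_of_nonneg_left a2 hp, mul_le_mul_of_nonneg_left b2 hq],
      by nlinarith [mul_le_mul_of_nonneg_left a3 hp, mul_le_mul_of_nonneg_left b3 hq],
      by nlinarith [mul_le_mul_of_nonneg_left a4 hp, mul_le_mul_of_nonneg_left b4 hq], ?_, ?_⟩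
    · rw [e1, n1]
      nlinarith [mul_nonneg hp hq, sq_nonneg ((v₁ + τ₁) - (v₂ + τ₂)),
        sq_nonneg (‖η₁ - ζ₁‖ - ‖η₂ - ζ₂‖), norm_nonneg (η₁ - ζ₁), norm_nonneg (η₂ - ζ₂)]
    · rw [e2, n2]
      nlinarith [mul_nonneg hp hq, sq_nonneg ((v₁ - τ₁) - (v₂ - τ₂)),
        sq_nonneg (‖η₁ + ζ₁‖ - ‖η₂ + ζ₂‖), norm_nonneg (η₁ + ζ₁), norm_nonneg (η₂ + ζ₂)]
  have hTclosed : IsClosed T := by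
    rw [hT]
    simp only [Set.setOf_and]
    refine ((isClosed_le continuous_const (by fun_prop)).inter
      ((isClosed_le (by fun_prop) continuous_const).inter
      ((isClosed_le continuous_const (by fun_prop)).inter
      ((isClosed_le (by fun_prop) continuous_const).inter
      ((isClosed_le (by fun_prop) continuous_const).inter
      (isClosed_le (by fun_prop) continuous_const))))))
  apply Set.Subset.antisymm
  · apply closure_minimal _ hTclosed
    apply convexHull_min _ hTconv
    rintro ⟨τ, v, η, ζ⟩ ⟨h1, h2, h3, h4, h5, h6⟩
    exact ⟨h1, h2, h3, h4, h5.le, h6.le⟩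
  · rintro ⟨τ, v, η, ζ⟩ ⟨h1, h2, h3, h4, h5, h6⟩
    apply subset_closure
    simp only [Set.mem_setOf_eq] at h1 h2 h3 h4 h5 h6
    have hx2 : ‖η - ζ‖ ^ 2 ≤ 1 - (v + τ) ^ 2 := by linarith
    have hy2 : ‖η + ζ‖ ^ 2 ≤ 1 - (v - τ) ^ 2 := by linarith
    have hx2' : (0:ℝ) ≤ 1 - (v + τ) ^ 2 := le_trans (sq_nonneg _) hx2
    have hy2' : (0:ℝ) ≤ 1 - (v - τ) ^ 2 := le_trans (sq_nonneg _) hy2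
    have hxr : ‖η - ζ‖ ≤ Real.sqrt (1 - (v + τ) ^ 2) := by
      have := Real.sqrt_le_sqrt hx2
      rwa [Real.sqrt_sq (norm_nonneg _)] at this
    have hyr : ‖η + ζ‖ ≤ Real.sqrt (1 - (v - τ) ^ 2) := by
      have := Real.sqrt_le_sqrt hy2
      rwa [Real.sqrt_sq (norm_nonneg _)] at this
    obtain ⟨u, t, hu, ht0, ht1, hut⟩ := aux_sphere17 hd (η - ζ) _ hxr
    obtain ⟨w, s, hw, hs0, hs1, hws⟩ := aux_sphere17 hd (η + ζ) _ hyr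
    have hu2 : ‖u‖ ^ 2 = 1 - (v + τ) ^ 2 := by rw [hu, Real.sq_sqrt hx2']
    have hw2 : ‖w‖ ^ 2 = 1 - (v - τ) ^ 2 := by rw [hw, Real.sq_sqrt hy2']
    have hmem : ∀ e f : E, ‖e‖ ^ 2 = 1 - (v + τ) ^ 2 → ‖f‖ ^ 2 = 1 - (v - τ) ^ 2 →
        ((τ, v, (2⁻¹ : ℝ) • (e + f), (2⁻¹ : ℝ) • (f - e)) : ℝ × ℝ × E × E) ∈ S := by
      intro e f he hf
      have hd1 : (2⁻¹ : ℝ) • (e + f) - (2⁻¹ : ℝ) • (f - e) = e := by module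
      have hd2 : (2⁻¹ : ℝ) • (e + f) + (2⁻¹ : ℝ) • (f - e) = f := by module
      refine ⟨h1, h2, h3, h4, ?_, ?_⟩
      · show (v + τ) ^ 2 + ‖(2⁻¹ : ℝ) • (e + f) - (2⁻¹ : ℝ) • (f - e)‖ ^ 2 = 1
        rw [hd1]; linarith
      · show (v - τ) ^ 2 + ‖(2⁻¹ : ℝ) • (e + f) + (2⁻¹ : ℝ) • (f - e)‖ ^ 2 = 1
        rw [hd2]; linarith
    have hnu : ‖(-u : E)‖ ^ 2 = 1 - (v + τ) ^ 2 := by rwa [norm_neg]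
    have hnw : ‖(-w : E)‖ ^ 2 = 1 - (v - τ) ^ 2 := by rwa [norm_neg]
    have P1 := hmem u w hu2 hw2
    have P2 := hmem u (-w) hu2 hnw
    have P3 := hmem (-u) w hnu hw2
    have P4 := hmem (-u) (-w) hnu hnw
    have key : ((τ, v, η, ζ) : ℝ × ℝ × E × E) =
        t • (s • ((τ, v, (2⁻¹ : ℝ) • (u + w), (2⁻¹ : ℝ) • (w - u)) : ℝ × ℝ × E × E)
             + (1 - s) • ((τ, v, (2⁻¹ : ℝ) • (u + -w), (2⁻¹ : ℝ) • (-w - u)) : ℝ × ℝ × E × E))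
        + (1 - t) • (s • ((τ, v, (2⁻¹ : ℝ) • (-u + w), (2⁻¹ : ℝ) • (w - -u)) : ℝ × ℝ × E × E)
             + (1 - s) • ((τ, v, (2⁻¹ : ℝ) • (-u + -w), (2⁻¹ : ℝ) • (-w - -u)) : ℝ × ℝ × E × E)) := by
      simp only [Prod.smul_mk, Prod.mk_add_mk, Prod.mk.injEq, smul_eq_mul]
      refine ⟨by ring, by ring, ?_, ?_⟩
      · linear_combination (norm := module) (-(2⁻¹ : ℝ)) • hut + (-(2⁻¹ : ℝ)) • hws
      · linear_combination (norm := module) (2⁻¹ : ℝ) • hut - (2⁻¹ : ℝ) • hws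
    rw [key]
    have c := convex_convexHull ℝ S
    exact c (c (subset_convexHull ℝ S P1) (subset_convexHull ℝ S P2) hs0 (by linarith) (by ring))
      (c (subset_convexHull ℝ S P3) (subset_convexHull ℝ S P4) hs0 (by linarith) (by ring))
      ht0 (by linarith) (by ring)
end
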